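/- arXiv:2412.04777 — 6 statements merged into one kernel-verified Lean document; each statement's English description precedes it below -/
import Mathlib

section
/- Let {A_α}_{α∈I} be a nonempty family of real numbers with sup_α A_α ≥ 0 ≥ inf_α A_α, and suppose the supremum and infimum are finite. Then inf_{λ∈ℝ} max{ sup_α |A_α + λ|, |λ| } = (1/2)(sup_α A_α − inf_α A_α). -/
theorem stmt_0 {I : Type*} [Nonempty I] (A : I → ℝ)
    (hbdd : BddAbove (Set.range A)) (hbdd' : BddBelow (Set.range A))
    (hsup : 0 ≤ ⨆ α, A α) (hinf : ⨅ α, A α ≤ 0) :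
    (⨅ l : ℝ, max (⨆ α, |A α + l|) |l|) = ((⨆ α, A α) - ⨅ α, A α) / 2 := by
  set M := ⨆ α, A α with hM
  set m := ⨅ α, A α with hm
  have hAle : ∀ α, A α ≤ M := fun α => le_ciSup hbdd α
  have hmle : ∀ α, m ≤ A α := fun α => ciInf_le hbdd' α
  have key : ∀ l : ℝ, (M - m) / 2 ≤ max (⨆ α, |A α + l|) |l| := by
    intro l
    have hb : BddAbove (Set.range fun α => |A α + l|) := by
      refine ⟨|M| + |m| + |l|, ?_⟩
      rintro x ⟨α, rfl⟩
      have h1 := hAle α; have h2 := hmle α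
      have hm0 : m ≤ 0 := hinf
      have hM0 : 0 ≤ M := hsup
      have : |A α| ≤ |M| + |m| := by
        rw [abs_le]
        constructor
        · nlinarith [neg_abs_le m, abs_nonneg M]
        · nlinarith [le_abs_self M, abs_nonneg m]
      calc |A α + l| ≤ |A α| + |l| := abs_add_le _ _
        _ ≤ |M| + |m| + |l| := by linarith
    set S := ⨆ α, |A α + l| with hS
    have h1 : M + l ≤ S := by
      have h : ∀ α, A α ≤ S - l := by
        intro α
        have h1 := le_ciSup hb α
        have h2 := le_abs_self (A α + l)
        change _ ≤ S at h1
        linarith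
      have := ciSup_le h
      linarith [this]
    have h2 : -m - l ≤ S := by
      have h : ∀ α, -l - S ≤ A α := by
        intro α
        have h1 := le_ciSup hb α
        have h2 := neg_abs_le (A α + l)
        change _ ≤ S at h1
        linarith
      have := le_ciInf h
      rw [← hm] at this
      linarith
    have : (M - m) / 2 ≤ S := by linarith
    exact le_trans this (le_max_left _ _)
  refine le_antisymm ?_ (le_ciInf key)
  have hbb : BddBelow (Set.range fun l : ℝ => max (⨆ α, |A α + l|) |l|) := by
    refine ⟨(M - m) / 2, ?_⟩
    rintro x ⟨l, rfl⟩
    exact key l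
  refine ciInf_le_of_le hbb (-(M + m) / 2) ?_
  have hm0 : m ≤ 0 := hinf
  have hM0 : 0 ≤ M := hsup
  apply max_le
  · apply ciSup_le
    intro α
    rw [abs_le]
    have h1 := hAle α; have h2 := hmle α
    constructor <;> linarith
  · rw [abs_le]
    constructor <;> linarith
end

section
/- Let (X,d) be a metric space and γ : [0,1] → X an injective curve such that for all 0 ≤ t₁ < t₂ < t₃ ≤ 1 one has d(γ(t₁),γ(t₃)) = d(γ(t₁),γ(t₂)) + d(γ(t₂),γ(t₃)), and assume γ is continuous with d(γ(0),γ(1)) > 0. Then there exists a reparametrization γ̃ = γ ∘ G of γ (with G : [0,1] → [0,1] a homeomorphism fixing 0 and 1) which is a geodesic, i.e. d(γ̃(s₁),γ̃(s₂)) = |s₁ − s₂| · d(γ̃(0),γ̃(1)) for all s₁,s₂ ∈ [0,1]. -/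
open Set

theorem stmt_1 {X : Type*} [MetricSpace X] (γ : ℝ → X)
    (hcont : ContinuousOn γ (Icc 0 1))
    (hinj : InjOn γ (Icc 0 1))
    (hadd : ∀ t₁ t₂ t₃ : ℝ, 0 ≤ t₁ → t₁ < t₂ → t₂ < t₃ → t₃ ≤ 1 →
      dist (γ t₁) (γ t₃) = dist (γ t₁) (γ t₂) + dist (γ t₂) (γ t₃))
    (hpos : 0 < dist (γ 0) (γ 1)) :
    ∃ G : ℝ → ℝ, G 0 = 0 ∧ G 1 = 1 ∧
      StrictMonoOn G (Icc 0 1) ∧ ContinuousOn G (Icc 0 1) ∧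
      G '' (Icc 0 1) = Icc 0 1 ∧
      ∀ s₁ ∈ Icc (0:ℝ) 1, ∀ s₂ ∈ Icc (0:ℝ) 1,
        dist (γ (G s₁)) (γ (G s₂)) = |s₁ - s₂| * dist (γ (G 0)) (γ (G 1)) := by
  set D : ℝ := dist (γ 0) (γ 1) with hD
  set f : ℝ → ℝ := fun t => dist (γ 0) (γ t) / D with hf
  -- key additivity along the curve from 0
  have key : ∀ t₁ t₂ : ℝ, 0 ≤ t₁ → t₁ ≤ t₂ → t₂ ≤ 1 →
      dist (γ 0) (γ t₂) = dist (γ 0) (γ t₁) + dist (γ t₁) (γ t₂) := by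
    intro t₁ t₂ h0 h12 h21
    rcases eq_or_lt_of_le h0 with h | h
    · simp [← h]
    rcases eq_or_lt_of_le h12 with h' | h'
    · simp [h']
    exact hadd 0 t₁ t₂ le_rfl h h' h21
  -- positivity of distances between distinct parameters
  have hdpos : ∀ t₁ t₂ : ℝ, t₁ ∈ Icc (0:ℝ) 1 → t₂ ∈ Icc (0:ℝ) 1 → t₁ < t₂ →
      0 < dist (γ t₁) (γ t₂) := by
    intro t₁ t₂ h1 h2 hlt
    rw [dist_pos]
    intro h
    exact absurd (hinj h1 h2 h) (ne_of_lt hlt)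
  have hfmono : StrictMonoOn f (Icc 0 1) := by
    intro t₁ h1 t₂ h2 hlt
    have := key t₁ t₂ h1.1 hlt.le h2.2
    have hd := hdpos t₁ t₂ h1 h2 hlt
    simp only [hf]
    rw [div_lt_div_iff_of_pos_right hpos]
    linarith
  have hf0 : f 0 = 0 := by simp [hf]
  have hf1 : f 1 = 1 := by simp only [hf]; exact div_self hpos.ne'
  have hfcont : ContinuousOn f (Icc 0 1) :=
    ((continuous_const.dist continuous_id).comp_continuousOn hcont).div_const D
  have hfmem : ∀ t ∈ Icc (0:ℝ) 1, f t ∈ Icc (0:ℝ) 1 := by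
    intro t ht
    rcases eq_or_lt_of_le ht.1 with h | h
    · simp [← h, hf0]
    rcases eq_or_lt_of_le ht.2 with h' | h'
    · simp [h', hf1]
    constructor
    · have := hfmono (left_mem_Icc.2 zero_le_one) ht h
      rw [hf0] at this; linarith
    · have := hfmono ht (right_mem_Icc.2 zero_le_one) h'
      rw [hf1] at this; linarith
  have hfsurj : SurjOn f (Icc 0 1) (Icc (0:ℝ) 1) := by
    have := hfcont.surjOn_Icc (left_mem_Icc.2 zero_le_one) (right_mem_Icc.2 zero_le_one)
    rwa [hf0, hf1] at this
  have hfinj : InjOn f (Icc 0 1) := hfmono.injOn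
  -- the inverse function on [0,1]
  set g : ℝ → ℝ := Function.invFunOn f (Icc 0 1) with hg
  have hgmem : ∀ s ∈ Icc (0:ℝ) 1, g s ∈ Icc (0:ℝ) 1 := by
    intro s hs
    exact Function.invFunOn_mem (hfsurj hs)
  have hfg : ∀ s ∈ Icc (0:ℝ) 1, f (g s) = s := by
    intro s hs
    exact Function.invFunOn_eq (hfsurj hs)
  have hgf : ∀ t ∈ Icc (0:ℝ) 1, g (f t) = t := by
    intro t ht
    exact hfinj (hgmem _ (hfmem t ht)) ht (hfg _ (hfmem t ht))
  have hgmono : StrictMonoOn g (Icc 0 1) := by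
    intro s₁ h1 s₂ h2 hlt
    by_contra h
    push_neg at h
    have := hfmono.monotoneOn (hgmem _ h2) (hgmem _ h1) h
    rw [hfg _ h1, hfg _ h2] at this
    linarith
  have hg0 : g 0 = 0 := by
    have := hgf 0 (left_mem_Icc.2 zero_le_one); rwa [hf0] at this
  have hg1 : g 1 = 1 := by
    have := hgf 1 (right_mem_Icc.2 zero_le_one); rwa [hf1] at this
  -- extend g to all of ℝ
  set G : ℝ → ℝ := fun s => if s < 0 then s else if 1 < s then s else g s with hGdef
  have hGeq : ∀ s ∈ Icc (0:ℝ) 1, G s = g s := by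
    intro s hs
    simp [hGdef, not_lt.2 hs.1, not_lt.2 hs.2]
  have hG0 : G 0 = 0 := by rw [hGeq 0 (left_mem_Icc.2 zero_le_one), hg0]
  have hG1 : G 1 = 1 := by rw [hGeq 1 (right_mem_Icc.2 zero_le_one), hg1]
  have hGmonoIcc : StrictMonoOn G (Icc 0 1) := by
    intro s₁ h1 s₂ h2 hlt
    rw [hGeq _ h1, hGeq _ h2]
    exact hgmono h1 h2 hlt
  have hGmono : Monotone G := by
    intro a b hab
    by_cases ha : a < 0
    · by_cases hb : b < 0
      · simp [hGdef, ha, hb, hab]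
      · push_neg at hb
        by_cases hb1 : 1 < b
        · simp only [hGdef, if_pos ha, if_neg (not_lt.2 hb), if_pos hb1]
          exact hab
        · push_neg at hb1
          have := (hgmem b ⟨hb, hb1⟩).1
          simp only [hGdef, if_pos ha, if_neg (not_lt.2 hb), if_neg (not_lt.2 hb1)]
          linarith
    · push_neg at ha
      have hb : (0:ℝ) ≤ b := le_trans ha hab
      by_cases ha1 : 1 < a
      · have hb1 : 1 < b := lt_of_lt_of_le ha1 hab
        simp only [hGdef, if_neg (not_lt.2 ha), if_pos ha1, if_neg (not_lt.2 hb), if_pos hb1]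
        exact hab
      · push_neg at ha1
        by_cases hb1 : 1 < b
        · have := (hgmem a ⟨ha, ha1⟩).2
          simp only [hGdef, if_neg (not_lt.2 ha), if_neg (not_lt.2 ha1),
            if_neg (not_lt.2 hb), if_pos hb1]
          linarith
        · push_neg at hb1
          simp only [hGdef, if_neg (not_lt.2 ha), if_neg (not_lt.2 ha1),
            if_neg (not_lt.2 hb), if_neg (not_lt.2 hb1)]
          exact (hgmono.monotoneOn) ⟨ha, ha1⟩ ⟨hb, hb1⟩ hab
  have hGsurj : Function.Surjective G := by
    intro y
    by_cases hy : y < 0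
    · exact ⟨y, by simp [hGdef, hy]⟩
    · push_neg at hy
      by_cases hy1 : 1 < y
      · exact ⟨y, by simp [hGdef, not_lt.2 hy, hy1]⟩
      · push_neg at hy1
        refine ⟨f y, ?_⟩
        rw [hGeq _ (hfmem y ⟨hy, hy1⟩), hgf y ⟨hy, hy1⟩]
  have hGcont : Continuous G := hGmono.continuous_of_surjective hGsurj
  have hGimage : G '' Icc 0 1 = Icc 0 1 := by
    apply Subset.antisymm
    · rintro _ ⟨s, hs, rfl⟩
      rw [hGeq _ hs]
      exact hgmem _ hs
    · intro t ht
      refine ⟨f t, hfmem t ht, ?_⟩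
      rw [hGeq _ (hfmem t ht), hgf t ht]
  refine ⟨G, hG0, hG1, hGmonoIcc, hGcont.continuousOn, hGimage, ?_⟩
  rw [hG0, hG1]
  -- main distance computation
  have main : ∀ s₁ ∈ Icc (0:ℝ) 1, ∀ s₂ ∈ Icc (0:ℝ) 1, s₁ ≤ s₂ →
      dist (γ (G s₁)) (γ (G s₂)) = (s₂ - s₁) * D := by
    intro s₁ h1 s₂ h2 hle
    rw [hGeq _ h1, hGeq _ h2]
    have ht1 := hgmem _ h1
    have ht2 := hgmem _ h2
    have htle : g s₁ ≤ g s₂ := hgmono.monotoneOn h1 h2 hle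
    have hk := key (g s₁) (g s₂) ht1.1 htle ht2.2
    have e1 : dist (γ 0) (γ (g s₁)) = s₁ * D := by
      have := hfg _ h1
      simp only [hf] at this
      field_simp at this
      linarith [this]
    have e2 : dist (γ 0) (γ (g s₂)) = s₂ * D := by
      have := hfg _ h2
      simp only [hf] at this
      field_simp at this
      linarith [this]
    rw [e1, e2] at hk
    linarith
  intro s₁ h1 s₂ h2
  rcases le_total s₁ s₂ with hle | hle
  · rw [main s₁ h1 s₂ h2 hle, abs_of_nonpos (by linarith)]
    ring
  · rw [dist_comm, main s₂ h2 s₁ h1 hle, abs_of_nonneg (by linarith)]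
end

section
/- Define d_ℤ(τ₁,τ₂) := sup_{s₁,s₂ ∈ ℤ} log( (|τ₁ − s₂||τ₂ − s₁|) / (|τ₂ − s₂||τ₁ − s₁|) ) for τ₁,τ₂ ∈ ℍ. Then d_ℤ is a metric on ℍ: it is nonnegative, symmetric, vanishes exactly on the diagonal, and satisfies the triangle inequality. -/
noncomputable def dZ (τ₁ τ₂ : ℂ) : ℝ :=
  ⨆ s₁ : ℤ, ⨆ s₂ : ℤ,
    Real.log ((‖τ₁ - (s₂ : ℂ)‖ * ‖τ₂ - (s₁ : ℂ)‖) /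
      (‖τ₂ - (s₂ : ℂ)‖ * ‖τ₁ - (s₁ : ℂ)‖))

noncomputable def hfun (τ₁ τ₂ : ℂ) (s : ℤ) : ℝ :=
  Real.log (‖τ₁ - (s : ℂ)‖) - Real.log (‖τ₂ - (s : ℂ)‖)

lemma abs_sub_int_pos {τ : ℂ} (hτ : 0 < τ.im) (s : ℤ) : 0 < ‖τ - (s : ℂ)‖ := by
  apply norm_pos_iff.mpr
  intro h
  have him : (τ - (s : ℂ)).im = 0 := by rw [h]; simp
  simp [Complex.sub_im] at him
  linarith

lemma im_le_abs {τ : ℂ} (hτ : 0 < τ.im) (s : ℤ) : τ.im ≤ ‖τ - (s : ℂ)‖ := by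
  calc τ.im = (τ - (s : ℂ)).im := by simp [Complex.sub_im]
    _ ≤ |(τ - (s : ℂ)).im| := le_abs_self _
    _ ≤ ‖τ - (s : ℂ)‖ := Complex.abs_im_le_norm _

lemma hfun_le {τ₁ τ₂ : ℂ} (h1 : 0 < τ₁.im) (h2 : 0 < τ₂.im) (s : ℤ) :
    hfun τ₁ τ₂ s ≤ Real.log (1 + ‖τ₁ - τ₂‖ / τ₂.im) := by
  have ha := abs_sub_int_pos h1 s
  have hb := abs_sub_int_pos h2 s
  rw [hfun, ← Real.log_div ha.ne' hb.ne']
  have hdnn : 0 ≤ ‖τ₁ - τ₂‖ / τ₂.im := div_nonneg (norm_nonneg _) h2.le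
  apply Real.log_le_log (by positivity)
  rw [div_le_iff₀ hb]
  have htri : ‖τ₁ - (s : ℂ)‖ ≤ ‖τ₂ - (s : ℂ)‖ + ‖τ₁ - τ₂‖ := by
    calc ‖τ₁ - (s : ℂ)‖ = ‖(τ₂ - (s : ℂ)) + (τ₁ - τ₂)‖ := by ring_nf
      _ ≤ _ := norm_add_le _ _
  have him := im_le_abs h2 s
  have hq : ‖τ₁ - τ₂‖ / τ₂.im * τ₂.im = ‖τ₁ - τ₂‖ :=
    div_mul_cancel₀ _ h2.ne'
  nlinarith [mul_le_mul_of_nonneg_left him hdnn]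

lemma hfun_bdd {τ₁ τ₂ : ℂ} (h1 : 0 < τ₁.im) (h2 : 0 < τ₂.im) :
    BddAbove (Set.range (hfun τ₁ τ₂)) := by
  refine ⟨Real.log (1 + ‖τ₁ - τ₂‖ / τ₂.im), ?_⟩
  rintro x ⟨s, rfl⟩
  exact hfun_le h1 h2 s

noncomputable def Sfun (τ₁ τ₂ : ℂ) : ℝ := ⨆ s : ℤ, hfun τ₁ τ₂ s

lemma my_ciSup_add {f : ℤ → ℝ} (hf : BddAbove (Set.range f)) (a : ℝ) :
    (⨆ i, (f i + a)) = (⨆ i, f i) + a := by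
  obtain ⟨B, hB⟩ := hf
  have hf' : BddAbove (Set.range fun i => f i + a) := by
    refine ⟨B + a, ?_⟩
    rintro x ⟨i, rfl⟩
    exact add_le_add (hB ⟨i, rfl⟩) le_rfl
  apply le_antisymm
  · exact ciSup_le fun i => add_le_add (le_ciSup ⟨B, hB⟩ i) le_rfl
  · have : (⨆ i, f i) ≤ (⨆ i, (f i + a)) - a := by
      apply ciSup_le
      intro i
      have := le_ciSup hf' i
      linarith
    linarith

lemma dZ_eq {τ₁ τ₂ : ℂ} (h1 : 0 < τ₁.im) (h2 : 0 < τ₂.im) :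
    dZ τ₁ τ₂ = Sfun τ₁ τ₂ + Sfun τ₂ τ₁ := by
  have hterm : ∀ s₁ s₂ : ℤ,
      Real.log ((‖τ₁ - (s₂ : ℂ)‖ * ‖τ₂ - (s₁ : ℂ)‖) /
        (‖τ₂ - (s₂ : ℂ)‖ * ‖τ₁ - (s₁ : ℂ)‖)) =
      hfun τ₁ τ₂ s₂ + hfun τ₂ τ₁ s₁ := by
    intro s₁ s₂
    have a1 := abs_sub_int_pos h1 s₁
    have a2 := abs_sub_int_pos h1 s₂
    have b1 := abs_sub_int_pos h2 s₁
    have b2 := abs_sub_int_pos h2 s₂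
    rw [Real.log_div (mul_pos a2 b1).ne' (mul_pos b2 a1).ne', Real.log_mul a2.ne' b1.ne',
      Real.log_mul b2.ne' a1.ne', hfun, hfun]
    ring
  unfold dZ
  simp_rw [hterm]
  have hinner : ∀ s₁ : ℤ, (⨆ s₂ : ℤ, (hfun τ₁ τ₂ s₂ + hfun τ₂ τ₁ s₁)) =
      Sfun τ₁ τ₂ + hfun τ₂ τ₁ s₁ := fun s₁ => my_ciSup_add (hfun_bdd h1 h2) _
  simp_rw [hinner]
  have hcomm : ∀ s₁ : ℤ, Sfun τ₁ τ₂ + hfun τ₂ τ₁ s₁ = hfun τ₂ τ₁ s₁ + Sfun τ₁ τ₂ :=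
    fun _ => add_comm _ _
  simp_rw [hcomm]
  rw [my_ciSup_add (hfun_bdd h2 h1)]
  exact add_comm _ _

lemma ratio_eq {τ₁ τ₂ : ℂ} (h1 : 0 < τ₁.im) (h2 : 0 < τ₂.im) (s : ℤ)
    (h : hfun τ₁ τ₂ s = hfun τ₁ τ₂ 0) :
    Complex.normSq (τ₁ - (s : ℂ)) * Complex.normSq τ₂ =
    Complex.normSq (τ₂ - (s : ℂ)) * Complex.normSq τ₁ := by
  have a1 := abs_sub_int_pos h1 s
  have a0 := abs_sub_int_pos h1 0
  have b1 := abs_sub_int_pos h2 s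
  have b0 := abs_sub_int_pos h2 0
  have hlog : Real.log (‖τ₁ - (s : ℂ)‖ * ‖τ₂ - ((0:ℤ) : ℂ)‖) =
      Real.log (‖τ₁ - ((0:ℤ) : ℂ)‖ * ‖τ₂ - (s : ℂ)‖) := by
    rw [Real.log_mul a1.ne' b0.ne', Real.log_mul a0.ne' b1.ne']
    simp only [hfun] at h
    linarith
  have heq : ‖τ₁ - (s : ℂ)‖ * ‖τ₂ - ((0:ℤ) : ℂ)‖ =
      ‖τ₁ - ((0:ℤ) : ℂ)‖ * ‖τ₂ - (s : ℂ)‖ := by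
    have := congrArg Real.exp hlog
    rwa [Real.exp_log (mul_pos a1 b0), Real.exp_log (mul_pos a0 b1)] at this
  have hsq := congrArg (· ^ 2) heq
  simp only [mul_pow, Complex.sq_norm] at hsq
  simp only [Int.cast_zero, sub_zero] at hsq ⊢
  linarith [hsq]

theorem stmt_5 :
    (∀ τ₁ τ₂ : ℂ, 0 < τ₁.im → 0 < τ₂.im → 0 ≤ dZ τ₁ τ₂) ∧
    (∀ τ₁ τ₂ : ℂ, 0 < τ₁.im → 0 < τ₂.im → dZ τ₁ τ₂ = dZ τ₂ τ₁) ∧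
    (∀ τ₁ τ₂ : ℂ, 0 < τ₁.im → 0 < τ₂.im → (dZ τ₁ τ₂ = 0 ↔ τ₁ = τ₂)) ∧
    (∀ τ₁ τ₂ τ₃ : ℂ, 0 < τ₁.im → 0 < τ₂.im → 0 < τ₃.im →
      dZ τ₁ τ₃ ≤ dZ τ₁ τ₂ + dZ τ₂ τ₃) := by
  refine ⟨?_, ?_, ?_, ?_⟩
  · intro τ₁ τ₂ h1 h2
    rw [dZ_eq h1 h2]
    have g1 := le_ciSup (hfun_bdd h1 h2) (0 : ℤ)
    have g2 := le_ciSup (hfun_bdd h2 h1) (0 : ℤ)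
    have : hfun τ₂ τ₁ 0 = - hfun τ₁ τ₂ 0 := by simp [hfun]
    unfold Sfun
    linarith
  · intro τ₁ τ₂ h1 h2
    rw [dZ_eq h1 h2, dZ_eq h2 h1, add_comm]
  · intro τ₁ τ₂ h1 h2
    constructor
    · intro hz
      rw [dZ_eq h1 h2] at hz
      have hconst : ∀ s : ℤ, hfun τ₁ τ₂ s = hfun τ₁ τ₂ 0 := by
        have key : ∀ s s' : ℤ, hfun τ₁ τ₂ s ≤ hfun τ₁ τ₂ s' := by
          intro s s'
          have g1 := le_ciSup (hfun_bdd h1 h2) s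
          have g2 := le_ciSup (hfun_bdd h2 h1) s'
          have hn : hfun τ₂ τ₁ s' = - hfun τ₁ τ₂ s' := by simp [hfun]
          unfold Sfun at hz
          rw [hn] at g2
          linarith
        exact fun s => le_antisymm (key s 0) (key 0 s)
      have e1 := ratio_eq h1 h2 1 (hconst 1)
      have e2 := ratio_eq h1 h2 (-1) (hconst (-1))
      simp only [Int.cast_one, Int.cast_neg, Complex.normSq_apply, Complex.sub_re,
        Complex.sub_im, Complex.one_re, Complex.one_im, Complex.neg_re, Complex.neg_im,
        sub_neg_eq_add, Complex.add_re, Complex.add_im, add_zero, sub_zero] at e1 e2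
      set x1 := τ₁.re; set y1 := τ₁.im; set x2 := τ₂.re; set y2 := τ₂.im
      have hN : x2 * x2 + y2 * y2 = x1 * x1 + y1 * y1 := by linarith
      have hN1pos : 0 < x1 * x1 + y1 * y1 := by nlinarith [sq_nonneg x1, mul_pos h1 h1]
      have hx : x1 = x2 := by
        have h4 : x1 * (x2 * x2 + y2 * y2) = x2 * (x1 * x1 + y1 * y1) := by linarith
        rw [hN] at h4
        exact mul_right_cancel₀ hN1pos.ne' h4
      have hy : y1 = y2 := by nlinarith [hN, hx, mul_pos h1 h2]
      exact Complex.ext hx hy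
    · rintro rfl
      rw [dZ_eq h1 h1]
      have : Sfun τ₁ τ₁ = 0 := by
        unfold Sfun
        have : ∀ s : ℤ, hfun τ₁ τ₁ s = 0 := by intro s; simp [hfun]
        simp_rw [this]
        exact ciSup_const
      rw [this]; ring
  · intro τ₁ τ₂ τ₃ h1 h2 h3
    rw [dZ_eq h1 h3, dZ_eq h1 h2, dZ_eq h2 h3]
    have key : ∀ (a b c : ℂ), 0 < a.im → 0 < b.im → 0 < c.im →
        Sfun a c ≤ Sfun a b + Sfun b c := by
      intro a b c ha hb hc
      apply ciSup_le
      intro s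
      have e : hfun a c s = hfun a b s + hfun b c s := by unfold hfun; ring
      have g1 := le_ciSup (hfun_bdd ha hb) s
      have g2 := le_ciSup (hfun_bdd hb hc) s
      unfold Sfun
      linarith
    have k1 := key τ₁ τ₂ τ₃ h1 h2 h3
    have k2 := key τ₃ τ₂ τ₁ h3 h2 h1
    linarith
end

section
/- The function d_ℤ(τ₁,τ₂) := sup_{s₁,s₂ ∈ ℤ} log( (|τ₁ − s₂||τ₂ − s₁|) / (|τ₂ − s₂||τ₁ − s₁|) ) extends to a metric on ℍ ∪ (ℝ \ ℤ): for τ₁,τ₂ ∈ ℍ ∪ (ℝ \ ℤ) the supremum is finite, symmetric, satisfies the triangle inequality, and d_ℤ(τ₁,τ₂) = 0 iff τ₁ = τ₂. -/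
/-- Membership in `ℍ ∪ (ℝ \ ℤ)`. -/
def memHZ (τ : ℂ) : Prop :=
  0 < τ.im ∨ (τ.im = 0 ∧ ∀ n : ℤ, τ.re ≠ (n : ℝ))

namespace DZAux

/-- The individual term in the sup defining `dZ`. -/
noncomputable def F (τ₁ τ₂ : ℂ) (s₁ s₂ : ℤ) : ℝ :=
  Real.log ((‖τ₁ - (s₂ : ℂ)‖ * ‖τ₂ - (s₁ : ℂ)‖) /
      (‖τ₂ - (s₂ : ℂ)‖ * ‖τ₁ - (s₁ : ℂ)‖))

noncomputable def g (τ₁ τ₂ : ℂ) (s : ℤ) : ℝ :=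
  Real.log (‖τ₁ - (s : ℂ)‖) - Real.log (‖τ₂ - (s : ℂ)‖)

lemma dZ_eq (τ₁ τ₂ : ℂ) : dZ τ₁ τ₂ = ⨆ s₁ : ℤ, ⨆ s₂ : ℤ, F τ₁ τ₂ s₁ s₂ := rfl

lemma abs_pos_of_mem (τ : ℂ) (h : memHZ τ) (s : ℤ) : 0 < ‖τ - s‖ := by
  rw [norm_pos_iff, sub_ne_zero]
  rintro rfl
  rcases h with h | ⟨h, h'⟩
  · simp at h
  · exact h' s (by simp)

lemma im_nonneg_of_mem (τ : ℂ) (h : memHZ τ) : 0 ≤ τ.im := by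
  rcases h with h | ⟨h, _⟩
  · exact h.le
  · exact h.ge

lemma exists_eps (τ : ℂ) (h : memHZ τ) :
    ∃ ε : ℝ, 0 < ε ∧ ∀ s : ℤ, ε ≤ ‖τ - s‖ := by
  rcases h with h | ⟨h0, h'⟩
  · refine ⟨τ.im, h, fun s => ?_⟩
    have h1 : |(τ - (s : ℂ)).im| ≤ ‖τ - s‖ := Complex.abs_im_le_norm _
    have h2 : (τ - (s : ℂ)).im = τ.im := by simp
    rw [h2, abs_of_pos h] at h1
    exact h1
  · refine ⟨|τ.re - round τ.re|, ?_, fun s => ?_⟩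
    · rw [abs_pos, sub_ne_zero]
      intro hh
      exact h' (round τ.re) hh
    · calc |τ.re - round τ.re| ≤ |τ.re - s| := round_le τ.re s
        _ = |(τ - (s : ℂ)).re| := by simp
        _ ≤ ‖τ - s‖ := Complex.abs_re_le_norm _

lemma F_eq (τ₁ τ₂ : ℂ) (h₁ : memHZ τ₁) (h₂ : memHZ τ₂) (s₁ s₂ : ℤ) :
    F τ₁ τ₂ s₁ s₂ = g τ₁ τ₂ s₂ - g τ₁ τ₂ s₁ := by
  have a1 := abs_pos_of_mem τ₁ h₁ s₁
  have a2 := abs_pos_of_mem τ₁ h₁ s₂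
  have b1 := abs_pos_of_mem τ₂ h₂ s₁
  have b2 := abs_pos_of_mem τ₂ h₂ s₂
  rw [F, g, g, Real.log_div (by positivity) (by positivity),
    Real.log_mul a2.ne' b1.ne', Real.log_mul b2.ne' a1.ne']
  ring

lemma g_le (τ₁ τ₂ : ℂ) (h₁ : memHZ τ₁) (s : ℤ) (ε : ℝ) (hε : 0 < ε)
    (hb : ∀ s : ℤ, ε ≤ ‖τ₂ - s‖) :
    g τ₁ τ₂ s ≤ Real.log (1 + ‖τ₁ - τ₂‖ / ε) := by
  have ha : 0 < ‖τ₁ - s‖ := abs_pos_of_mem τ₁ h₁ s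
  have hbpos : 0 < ‖τ₂ - s‖ := lt_of_lt_of_le hε (hb s)
  set a := ‖τ₁ - (s : ℂ)‖ with ha_def
  set b := ‖τ₂ - (s : ℂ)‖ with hb_def
  set D := ‖τ₁ - τ₂‖ with hD_def
  have hD : 0 ≤ D := norm_nonneg _
  have hab : a ≤ b + D := by
    have h1 : τ₁ - (s : ℂ) = (τ₁ - τ₂) + (τ₂ - (s : ℂ)) := by ring
    calc a = ‖(τ₁ - τ₂) + (τ₂ - (s : ℂ))‖ := by rw [ha_def, h1]
      _ ≤ D + b := norm_add_le _ _
      _ = b + D := add_comm _ _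
  have key : a ≤ b * (1 + D / ε) := by
    have h1 : ε * (D / ε) = D := mul_div_cancel₀ D hε.ne'
    have h2 : ε * (D / ε) ≤ b * (D / ε) :=
      mul_le_mul_of_nonneg_right (hb s) (div_nonneg hD hε.le)
    nlinarith
  have hlog : Real.log a ≤ Real.log (b * (1 + D / ε)) := Real.log_le_log ha key
  have hmul : Real.log (b * (1 + D / ε)) = Real.log b + Real.log (1 + D / ε) :=
    Real.log_mul hbpos.ne' (by positivity)
  have : g τ₁ τ₂ s = Real.log a - Real.log b := rfl
  rw [this]
  linarith

lemma g_neg (τ₁ τ₂ : ℂ) (s : ℤ) : g τ₂ τ₁ s = - g τ₁ τ₂ s := by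
  rw [g, g]; ring

lemma g_abs_bound (τ₁ τ₂ : ℂ) (h₁ : memHZ τ₁) (h₂ : memHZ τ₂) :
    ∃ B : ℝ, ∀ s : ℤ, |g τ₁ τ₂ s| ≤ B := by
  obtain ⟨ε₁, hε₁, hb₁⟩ := exists_eps τ₁ h₁
  obtain ⟨ε₂, hε₂, hb₂⟩ := exists_eps τ₂ h₂
  set D := ‖τ₁ - τ₂‖ with hD_def
  have hD : 0 ≤ D := norm_nonneg _
  refine ⟨Real.log (1 + D / ε₁) + Real.log (1 + D / ε₂), fun s => ?_⟩
  have hu := g_le τ₁ τ₂ h₁ s ε₂ hε₂ hb₂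
  have hl := g_le τ₂ τ₁ h₂ s ε₁ hε₁ hb₁
  have habs : ‖τ₂ - τ₁‖ = D := norm_sub_rev _ _
  rw [habs, g_neg] at hl
  have l1 : 0 ≤ Real.log (1 + D / ε₁) :=
    Real.log_nonneg (le_add_of_nonneg_right (by positivity))
  have l2 : 0 ≤ Real.log (1 + D / ε₂) :=
    Real.log_nonneg (le_add_of_nonneg_right (by positivity))
  rw [abs_le]
  constructor <;> linarith

lemma F_bound (τ₁ τ₂ : ℂ) (h₁ : memHZ τ₁) (h₂ : memHZ τ₂) :
    ∃ M : ℝ, ∀ i j : ℤ, F τ₁ τ₂ i j ≤ M := by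
  obtain ⟨B, hB⟩ := g_abs_bound τ₁ τ₂ h₁ h₂
  refine ⟨2 * B, fun i j => ?_⟩
  rw [F_eq τ₁ τ₂ h₁ h₂ i j]
  have hi := abs_le.mp (hB i)
  have hj := abs_le.mp (hB j)
  linarith [hi.1, hi.2, hj.1, hj.2]

lemma ciSup2_le {f : ℤ → ℤ → ℝ} {M : ℝ} (h : ∀ i j, f i j ≤ M) :
    (⨆ i, ⨆ j, f i j) ≤ M :=
  ciSup_le fun i => ciSup_le fun j => h i j

lemma le_ciSup2 {f : ℤ → ℤ → ℝ} {M : ℝ} (h : ∀ i j, f i j ≤ M) (i j : ℤ) :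
    f i j ≤ ⨆ i, ⨆ j, f i j := by
  have h1 : f i j ≤ ⨆ j, f i j :=
    le_ciSup (f := f i) ⟨M, by rintro x ⟨j, rfl⟩; exact h i j⟩ j
  have h2 : (⨆ j, f i j) ≤ ⨆ i, ⨆ j, f i j :=
    le_ciSup (f := fun i => ⨆ j, f i j)
      ⟨M, by rintro x ⟨i, rfl⟩; exact ciSup_le (h i)⟩ i
  exact h1.trans h2

lemma F_swap (τ₁ τ₂ : ℂ) (i j : ℤ) : F τ₂ τ₁ i j = F τ₁ τ₂ j i := by
  rw [F, F]
  congr 1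
  ring

lemma dZ_nonneg (τ₁ τ₂ : ℂ) (h₁ : memHZ τ₁) (h₂ : memHZ τ₂) : 0 ≤ dZ τ₁ τ₂ := by
  obtain ⟨M, hM⟩ := F_bound τ₁ τ₂ h₁ h₂
  have h0 : F τ₁ τ₂ 0 0 = 0 := by
    rw [F_eq τ₁ τ₂ h₁ h₂, sub_self]
  rw [dZ_eq]
  calc (0 : ℝ) = F τ₁ τ₂ 0 0 := h0.symm
    _ ≤ _ := le_ciSup2 hM 0 0

lemma dZ_symm_le (τ₁ τ₂ : ℂ) (h₁ : memHZ τ₁) (h₂ : memHZ τ₂) :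
    dZ τ₁ τ₂ ≤ dZ τ₂ τ₁ := by
  obtain ⟨M, hM⟩ := F_bound τ₂ τ₁ h₂ h₁
  rw [dZ_eq, dZ_eq]
  refine ciSup2_le fun i j => ?_
  have hsw : F τ₁ τ₂ i j = F τ₂ τ₁ j i := (F_swap τ₁ τ₂ j i).symm
  rw [hsw]
  exact le_ciSup2 hM j i

end DZAux

theorem stmt_6 :
    (∀ τ₁ τ₂ : ℂ, memHZ τ₁ → memHZ τ₂ →
      BddAbove (Set.range fun p : ℤ × ℤ =>
        Real.log ((‖τ₁ - (p.2 : ℂ)‖ * ‖τ₂ - (p.1 : ℂ)‖) /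
          (‖τ₂ - (p.2 : ℂ)‖ * ‖τ₁ - (p.1 : ℂ)‖)))) ∧
    (∀ τ₁ τ₂ : ℂ, memHZ τ₁ → memHZ τ₂ → 0 ≤ dZ τ₁ τ₂) ∧
    (∀ τ₁ τ₂ : ℂ, memHZ τ₁ → memHZ τ₂ → dZ τ₁ τ₂ = dZ τ₂ τ₁) ∧
    (∀ τ₁ τ₂ τ₃ : ℂ, memHZ τ₁ → memHZ τ₂ → memHZ τ₃ →
      dZ τ₁ τ₃ ≤ dZ τ₁ τ₂ + dZ τ₂ τ₃) ∧
    (∀ τ₁ τ₂ : ℂ, memHZ τ₁ → memHZ τ₂ → (dZ τ₁ τ₂ = 0 ↔ τ₁ = τ₂)) := by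
  open DZAux in
  refine ⟨?_, ?_, ?_, ?_, ?_⟩
  · -- BddAbove
    intro τ₁ τ₂ h₁ h₂
    obtain ⟨M, hM⟩ := DZAux.F_bound τ₁ τ₂ h₁ h₂
    refine ⟨M, ?_⟩
    rintro x ⟨p, rfl⟩
    exact hM p.1 p.2
  · -- nonneg
    exact DZAux.dZ_nonneg
  · -- symm
    intro τ₁ τ₂ h₁ h₂
    exact le_antisymm (DZAux.dZ_symm_le τ₁ τ₂ h₁ h₂) (DZAux.dZ_symm_le τ₂ τ₁ h₂ h₁)
  · -- triangle
    intro τ₁ τ₂ τ₃ h₁ h₂ h₃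
    obtain ⟨M₁, hM₁⟩ := DZAux.F_bound τ₁ τ₂ h₁ h₂
    obtain ⟨M₂, hM₂⟩ := DZAux.F_bound τ₂ τ₃ h₂ h₃
    rw [DZAux.dZ_eq τ₁ τ₃, DZAux.dZ_eq τ₁ τ₂, DZAux.dZ_eq τ₂ τ₃]
    refine DZAux.ciSup2_le fun i j => ?_
    have hsplit : DZAux.F τ₁ τ₃ i j = DZAux.F τ₁ τ₂ i j + DZAux.F τ₂ τ₃ i j := by
      rw [DZAux.F_eq τ₁ τ₃ h₁ h₃, DZAux.F_eq τ₁ τ₂ h₁ h₂, DZAux.F_eq τ₂ τ₃ h₂ h₃]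
      simp only [DZAux.g]
      ring
    rw [hsplit]
    exact add_le_add (DZAux.le_ciSup2 hM₁ i j) (DZAux.le_ciSup2 hM₂ i j)
  · -- zero iff eq
    intro τ₁ τ₂ h₁ h₂
    constructor
    · intro hd
      obtain ⟨M, hM⟩ := DZAux.F_bound τ₁ τ₂ h₁ h₂
      have hle : ∀ i j : ℤ, DZAux.F τ₁ τ₂ i j ≤ 0 := by
        intro i j
        have := DZAux.le_ciSup2 hM i j
        rw [← DZAux.dZ_eq, hd] at this
        exact this
      have hzero : ∀ i j : ℤ, DZAux.F τ₁ τ₂ i j = 0 := by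
        intro i j
        have hsum : DZAux.F τ₁ τ₂ i j + DZAux.F τ₁ τ₂ j i = 0 := by
          rw [DZAux.F_eq τ₁ τ₂ h₁ h₂ i j, DZAux.F_eq τ₁ τ₂ h₁ h₂ j i]
          ring
        have := hle j i
        linarith [hle i j]
      have hgconst : ∀ s : ℤ, DZAux.g τ₁ τ₂ s = DZAux.g τ₁ τ₂ 0 := by
        intro s
        have := hzero 0 s
        rw [DZAux.F_eq τ₁ τ₂ h₁ h₂ 0 s] at this
        linarith
      -- cross-ratio equality
      have hratio : ∀ s : ℤ,
          ‖τ₁ - (s : ℂ)‖ * ‖τ₂ - ((0 : ℤ) : ℂ)‖ =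
          ‖τ₁ - ((0 : ℤ) : ℂ)‖ * ‖τ₂ - (s : ℂ)‖ := by
        intro s
        have pa := DZAux.abs_pos_of_mem τ₁ h₁ s
        have pb := DZAux.abs_pos_of_mem τ₂ h₂ s
        have pa0 := DZAux.abs_pos_of_mem τ₁ h₁ 0
        have pb0 := DZAux.abs_pos_of_mem τ₂ h₂ 0
        have hs := hgconst s
        rw [DZAux.g, DZAux.g] at hs
        have hlogs : Real.log (‖τ₁ - (s : ℂ)‖ * ‖τ₂ - ((0 : ℤ) : ℂ)‖) =
            Real.log (‖τ₁ - ((0 : ℤ) : ℂ)‖ * ‖τ₂ - (s : ℂ)‖) := by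
          rw [Real.log_mul pa.ne' pb0.ne', Real.log_mul pa0.ne' pb.ne']
          linarith
        exact Real.log_injOn_pos (Set.mem_Ioi.mpr (by positivity))
          (Set.mem_Ioi.mpr (by positivity)) hlogs
      have e1 := hratio 1
      have e2 := hratio (-1)
      simp only [Int.cast_one, Int.cast_zero, Int.cast_neg, sub_zero, sub_neg_eq_add] at e1 e2
      -- square the equalities
      have sq1 : Complex.normSq (τ₁ - 1) * Complex.normSq τ₂ =
          Complex.normSq τ₁ * Complex.normSq (τ₂ - 1) := by
        have := congrArg (fun t : ℝ => t ^ 2) e1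
        simpa [mul_pow, Complex.sq_norm] using this
      have sq2 : Complex.normSq (τ₁ + 1) * Complex.normSq τ₂ =
          Complex.normSq τ₁ * Complex.normSq (τ₂ + 1) := by
        have := congrArg (fun t : ℝ => t ^ 2) e2
        simpa [mul_pow, Complex.sq_norm] using this
      set x := τ₁.re with hx_def
      set y := τ₁.im with hy_def
      set x' := τ₂.re with hx'_def
      set y' := τ₂.im with hy'_def
      have E1 : ((x - 1) ^ 2 + y ^ 2) * (x' ^ 2 + y' ^ 2) =
          (x ^ 2 + y ^ 2) * ((x' - 1) ^ 2 + y' ^ 2) := by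
        simp only [Complex.normSq_apply, Complex.sub_re, Complex.sub_im,
          Complex.one_re, Complex.one_im] at sq1
        linear_combination sq1
      have E2 : ((x + 1) ^ 2 + y ^ 2) * (x' ^ 2 + y' ^ 2) =
          (x ^ 2 + y ^ 2) * ((x' + 1) ^ 2 + y' ^ 2) := by
        simp only [Complex.normSq_apply, Complex.add_re, Complex.add_im,
          Complex.one_re, Complex.one_im] at sq2
        linear_combination sq2
      have hP : 0 < x ^ 2 + y ^ 2 := by
        have := DZAux.abs_pos_of_mem τ₁ h₁ 0
        simp only [Int.cast_zero, sub_zero] at this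
        have hne : τ₁ ≠ 0 := by
          intro hh; rw [hh] at this; simp at this
        have := Complex.normSq_pos.mpr hne
        rw [Complex.normSq_apply] at this
        nlinarith
      have hPP : x' ^ 2 + y' ^ 2 = x ^ 2 + y ^ 2 := by
        linear_combination (E1 + E2) / 2
      have h4 : x * (x' ^ 2 + y' ^ 2) = x' * (x ^ 2 + y ^ 2) := by
        linear_combination (E2 - E1) / 4
      rw [hPP] at h4
      have hx : x = x' := mul_right_cancel₀ hP.ne' h4
      have hy2 : y ^ 2 = y' ^ 2 := by
        linear_combination - hPP - (x + x') * hx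
      have hynn : 0 ≤ y := DZAux.im_nonneg_of_mem τ₁ h₁
      have hynn' : 0 ≤ y' := DZAux.im_nonneg_of_mem τ₂ h₂
      have hy : y = y' := by
        rw [← Real.sqrt_sq hynn, hy2, Real.sqrt_sq hynn']
      exact Complex.ext hx hy
    · rintro rfl
      have hF : ∀ i j : ℤ, DZAux.F τ₁ τ₁ i j = 0 := by
        intro i j
        rw [DZAux.F_eq τ₁ τ₁ h₁ h₁]
        simp only [DZAux.g]
        ring
      rw [DZAux.dZ_eq]
      simp only [hF, ciSup_const]
end

section
/- Let τ₁, τ₂ ∈ ℍ ∪ (ℝ\ℤ) and let τ₃ lie on the hyperbolic geodesic segment between τ₁ and τ₂. Then d_ℤ(τ₁,τ₂) = d_ℤ(τ₁,τ₃) + d_ℤ(τ₃,τ₂). Consequently, every hyperbolic geodesic is, after reparametrization, also a geodesic for d_ℤ, and the metric space (ℍ ∪ (ℝ\ℤ), d_ℤ) is a geodesic space. -/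
/-- `τ₃` lies on the hyperbolic geodesic segment between `τ₁` and `τ₂`:
either all three points lie on a common vertical line, with `τ₃` between
`τ₁` and `τ₂`, or they lie on a common semicircle orthogonal to `ℝ`, with
the real part of `τ₃` between those of `τ₁` and `τ₂`. -/
def OnGeodSeg (τ₁ τ₂ τ₃ : ℂ) : Prop :=
  (τ₁.re = τ₂.re ∧ τ₃.re = τ₁.re ∧ τ₃.im ∈ Set.uIcc τ₁.im τ₂.im) ∨
  (∃ c r : ℝ, 0 < r ∧ ‖τ₁ - (c : ℂ)‖ = r ∧
    ‖τ₂ - (c : ℂ)‖ = r ∧ ‖τ₃ - (c : ℂ)‖ = r ∧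
    τ₃.re ∈ Set.uIcc τ₁.re τ₂.re)

noncomputable def LL (τ τ' : ℂ) (s : ℤ) : ℝ :=
  Real.log (‖τ - (s : ℂ)‖) - Real.log (‖τ' - (s : ℂ)‖)

lemma memHZ.im_nonneg {τ : ℂ} (h : memHZ τ) : 0 ≤ τ.im := by
  rcases h with h | ⟨h, _⟩
  · exact le_of_lt h
  · exact le_of_eq h.symm

lemma memHZ.ne_int {τ : ℂ} (h : memHZ τ) (s : ℤ) : τ ≠ (s : ℂ) := by
  intro he
  rcases h with h | ⟨h, h2⟩
  · rw [he] at h; simp at h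
  · exact h2 s (by rw [he]; simp)

lemma memHZ.abs_pos {τ : ℂ} (h : memHZ τ) (s : ℤ) : 0 < ‖τ - (s : ℂ)‖ := by
  rw [norm_pos_iff, sub_ne_zero]
  exact h.ne_int s

lemma memHZ.normSq_pos {τ : ℂ} (h : memHZ τ) (s : ℤ) : 0 < Complex.normSq (τ - (s : ℂ)) := by
  rw [Complex.normSq_pos, sub_ne_zero]
  exact h.ne_int s

lemma bdd_of_le {f : ℤ → ℝ} {c : ℝ} (h : ∀ s, f s ≤ c) : BddAbove (Set.range f) :=
  ⟨c, by rintro _ ⟨s, rfl⟩; exact h s⟩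

lemma iSup_eq_of_le {f : ℤ → ℝ} (s₀ : ℤ) (h : ∀ s, f s ≤ f s₀) : (⨆ s, f s) = f s₀ :=
  le_antisymm (ciSup_le h) (le_ciSup (bdd_of_le h) s₀)

lemma dZ_rw {τ τ' : ℂ} (h1 : memHZ τ) (h2 : memHZ τ')
    (b1 : BddAbove (Set.range (LL τ τ'))) (b2 : BddAbove (Set.range (LL τ' τ))) :
    dZ τ τ' = (⨆ s, LL τ τ' s) + (⨆ s, LL τ' τ s) := by
  have e : ∀ s₁ s₂ : ℤ,
      Real.log ((‖τ - (s₂ : ℂ)‖ * ‖τ' - (s₁ : ℂ)‖) /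
        (‖τ' - (s₂ : ℂ)‖ * ‖τ - (s₁ : ℂ)‖))
      = LL τ τ' s₂ + LL τ' τ s₁ := by
    intro s₁ s₂
    rw [Real.log_div (ne_of_gt (mul_pos (h1.abs_pos s₂) (h2.abs_pos s₁)))
      (ne_of_gt (mul_pos (h2.abs_pos s₂) (h1.abs_pos s₁))),
      Real.log_mul (ne_of_gt (h1.abs_pos s₂)) (ne_of_gt (h2.abs_pos s₁)),
      Real.log_mul (ne_of_gt (h2.abs_pos s₂)) (ne_of_gt (h1.abs_pos s₁))]
    unfold LL; ring
  unfold dZ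
  have e2 : ∀ s₁ : ℤ, (⨆ s₂ : ℤ,
      Real.log ((‖τ - (s₂ : ℂ)‖ * ‖τ' - (s₁ : ℂ)‖) /
        (‖τ' - (s₂ : ℂ)‖ * ‖τ - (s₁ : ℂ)‖)))
      = (⨆ s, LL τ τ' s) + LL τ' τ s₁ := by
    intro s₁
    have : (fun s₂ : ℤ => Real.log ((‖τ - (s₂ : ℂ)‖ * ‖τ' - (s₁ : ℂ)‖) /
        (‖τ' - (s₂ : ℂ)‖ * ‖τ - (s₁ : ℂ)‖)))
        = fun s₂ => LL τ τ' s₂ + LL τ' τ s₁ := funext (fun s₂ => e s₁ s₂)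
    rw [this, ciSup_add b1]
  calc (⨆ s₁ : ℤ, ⨆ s₂ : ℤ, Real.log ((‖τ - (s₂ : ℂ)‖ * ‖τ' - (s₁ : ℂ)‖) /
      (‖τ' - (s₂ : ℂ)‖ * ‖τ - (s₁ : ℂ)‖)))
      = ⨆ s₁ : ℤ, ((⨆ s, LL τ τ' s) + LL τ' τ s₁) := by
        exact iSup_congr e2
    _ = (⨆ s, LL τ τ' s) + (⨆ s, LL τ' τ s) := (add_ciSup b2 _).symm

lemma dZ_symm {τ τ' : ℂ} (h1 : memHZ τ) (h2 : memHZ τ')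
    (b1 : BddAbove (Set.range (LL τ τ'))) (b2 : BddAbove (Set.range (LL τ' τ))) :
    dZ τ τ' = dZ τ' τ := by
  rw [dZ_rw h1 h2 b1 b2, dZ_rw h2 h1 b2 b1, add_comm]

lemma LL_eq {τ τ' : ℂ} (s : ℤ) :
    LL τ τ' s = (Real.log (Complex.normSq (τ - (s : ℂ))) -
      Real.log (Complex.normSq (τ' - (s : ℂ)))) / 2 := by
  unfold LL
  rw [Complex.norm_def, Complex.norm_def, Real.log_sqrt (Complex.normSq_nonneg _),
    Real.log_sqrt (Complex.normSq_nonneg _)]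
  ring

lemma log_comp {A B At Bt α β : ℝ}
    (h1 : 0 < A - α*B) (h2 : 0 < A - β*B) (h3 : 0 < At - α*Bt) (h4 : 0 < At - β*Bt)
    (key : 0 ≤ (α - β) * (A*Bt - At*B)) :
    Real.log (At - α*Bt) - Real.log (At - β*Bt) ≤ Real.log (A - α*B) - Real.log (A - β*B) := by
  rw [sub_le_sub_iff, ← Real.log_mul (ne_of_gt h3) (ne_of_gt h2),
    ← Real.log_mul (ne_of_gt h1) (ne_of_gt h4),
    Real.log_le_log_iff (by positivity) (by positivity)]
  nlinarith [key]

lemma abs_split {a b c : ℝ} (h : c ∈ Set.uIcc a b) : |a - b| = |a - c| + |c - b| := by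
  rcases le_total a b with hab | hab
  · rw [Set.uIcc_of_le hab] at h
    obtain ⟨hh1, hh2⟩ := h
    rw [abs_of_nonpos (by linarith), abs_of_nonpos (by linarith), abs_of_nonpos (by linarith)]
    ring
  · rw [Set.uIcc_of_ge hab] at h
    obtain ⟨hh1, hh2⟩ := h
    rw [abs_of_nonneg (by linarith), abs_of_nonneg (by linarith), abs_of_nonneg (by linarith)]
    ring

lemma affine_pos {A B a b y : ℝ} (h1 : 0 < A - a*B) (h2 : 0 < A - b*B)
    (hy : y ∈ Set.uIcc a b) : 0 < A - y*B := by
  rcases Set.mem_uIcc.1 hy with ⟨h3, h4⟩ | ⟨h3, h4⟩ <;> rcases le_total B 0 with hB | hB <;>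
    nlinarith

lemma vert_normSq (τ : ℂ) (s : ℤ) :
    Complex.normSq (τ - (s : ℂ)) = ((s : ℝ) - τ.re)^2 + τ.im^2 := by
  simp [Complex.normSq_apply, Complex.sub_re, Complex.sub_im]; ring

lemma log_comp' {Q Qt α β : ℝ} (h1 : 0 < Q + α) (h2 : 0 < Q + β) (h3 : 0 < Qt + α)
    (h4 : 0 < Qt + β) (key : 0 ≤ (α - β) * (Qt - Q)) :
    Real.log (Qt + α) - Real.log (Qt + β) ≤ Real.log (Q + α) - Real.log (Q + β) := by
  rw [sub_le_sub_iff, ← Real.log_mul (ne_of_gt h3) (ne_of_gt h2),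
    ← Real.log_mul (ne_of_gt h1) (ne_of_gt h4),
    Real.log_le_log_iff (by positivity) (by positivity)]
  nlinarith [key]

lemma round_sq_le (x : ℝ) (t : ℤ) : ((round x : ℝ) - x)^2 ≤ ((t : ℝ) - x)^2 := by
  by_cases h : t = round x
  · rw [h]
  · have h1 : |x - (round x : ℝ)| ≤ 1/2 := abs_sub_round x
    have h2 : (1 : ℝ) ≤ |(t : ℝ) - (round x : ℝ)| := by
      have : t - round x ≠ 0 := sub_ne_zero.2 h
      have := Int.one_le_abs this
      calc (1:ℝ) ≤ ((|t - round x| : ℤ) : ℝ) := by exact_mod_cast this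
        _ = |(t : ℝ) - (round x : ℝ)| := by push_cast; ring
    have h3 : |(t : ℝ) - (round x : ℝ)| ≤ |(t:ℝ) - x| + |x - (round x : ℝ)| := by
      have := abs_sub_le ((t:ℝ)) x ((round x : ℝ)); linarith [this]
    have h4 : (1:ℝ)/2 ≤ |(t:ℝ) - x| := by linarith
    have h5 : |(round x : ℝ) - x| ≤ |(t:ℝ) - x| := by
      rw [abs_sub_comm]; linarith
    calc ((round x : ℝ) - x)^2 = |(round x : ℝ) - x|^2 := (sq_abs _).symm
      _ ≤ |(t:ℝ) - x|^2 := by nlinarith [abs_nonneg ((round x : ℝ) - x)]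
      _ = ((t:ℝ) - x)^2 := sq_abs _

noncomputable def Vc (x y : ℝ) : ℝ := Real.log (((round x : ℝ) - x)^2 + y^2) / 2

lemma vert_pos {τ : ℂ} (h : memHZ τ) : 0 < ((round τ.re : ℝ) - τ.re)^2 + τ.im^2 := by
  have := h.normSq_pos (round τ.re)
  rwa [vert_normSq] at this

lemma vert_pos' {τ : ℂ} (h : memHZ τ) (s : ℤ) : 0 < ((s : ℝ) - τ.re)^2 + τ.im^2 := by
  have := h.normSq_pos s
  rwa [vert_normSq] at this

lemma Vc_mono {x u v : ℝ} (hu : 0 < ((round x : ℝ) - x)^2 + u^2) (h0 : 0 ≤ u) (huv : u ≤ v) :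
    Vc x u ≤ Vc x v := by
  unfold Vc
  have : Real.log (((round x : ℝ) - x)^2 + u^2) ≤ Real.log (((round x : ℝ) - x)^2 + v^2) :=
    (Real.log_le_log_iff hu (by nlinarith)).2 (by nlinarith)
  linarith

lemma vert_bound1 {τ τ' : ℂ} (h1 : memHZ τ) (h2 : memHZ τ') (hre : τ'.re = τ.re)
    (him : τ'.im ≤ τ.im) (s : ℤ) : LL τ τ' s ≤ LL τ τ' (round τ.re) := by
  rw [LL_eq, LL_eq, vert_normSq, vert_normSq, vert_normSq, vert_normSq, hre]
  have key : 0 ≤ (τ.im^2 - τ'.im^2) * (((s:ℝ) - τ.re)^2 - ((round τ.re : ℝ) - τ.re)^2) := by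
    have hsq : τ'.im^2 ≤ τ.im^2 := by nlinarith [h2.im_nonneg]
    exact mul_nonneg (by linarith) (by linarith [round_sq_le τ.re s])
  have c := log_comp' (Q := ((round τ.re : ℝ) - τ.re)^2) (Qt := ((s:ℝ) - τ.re)^2)
    (α := τ.im^2) (β := τ'.im^2) (vert_pos h1) (by rw [← hre]; exact vert_pos h2)
    (vert_pos' h1 s) (by rw [← hre]; exact vert_pos' h2 s) key
  linarith

lemma vert_bound2 {τ τ' : ℂ} (h1 : memHZ τ) (h2 : memHZ τ') (hre : τ'.re = τ.re)
    (him : τ'.im ≤ τ.im) (s : ℤ) : LL τ' τ s ≤ 0 := by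
  rw [LL_eq, vert_normSq, vert_normSq, hre]
  have p1 : 0 < ((s:ℝ) - τ.re)^2 + τ'.im^2 := by rw [← hre]; exact vert_pos' h2 s
  have p2 : 0 < ((s:ℝ) - τ.re)^2 + τ.im^2 := vert_pos' h1 s
  have him0 := h2.im_nonneg
  have : Real.log (((s:ℝ) - τ.re)^2 + τ'.im^2) ≤ Real.log (((s:ℝ) - τ.re)^2 + τ.im^2) :=
    (Real.log_le_log_iff p1 p2).2 (by nlinarith)
  linarith

lemma sup_vert_zero {τ τ' : ℂ} (h1 : memHZ τ) (h2 : memHZ τ') (hre : τ'.re = τ.re)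
    (him : τ'.im ≤ τ.im) : (⨆ s, LL τ' τ s) = 0 := by
  have hb : ∀ s, LL τ' τ s ≤ 0 := vert_bound2 h1 h2 hre him
  refine le_antisymm (ciSup_le hb) ?_
  by_contra hlt
  push_neg at hlt
  set S := ⨆ s, LL τ' τ s with hS
  have hSneg : S < 0 := hlt
  set a := τ.im with ha
  set b := τ'.im with hb'
  have hab : b ≤ a := him
  have hb0 : 0 ≤ b := h2.im_nonneg
  obtain ⟨n, hn⟩ := exists_nat_gt ((a^2 - b^2) / (2 * (-S)) + 1)
  set s : ℤ := ⌈τ.re⌉ + n with hs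
  have hsx : (n : ℝ) ≤ (s : ℝ) - τ.re := by
    have := Int.le_ceil τ.re
    push_cast [hs]
    linarith
  have hdiv0 : 0 ≤ (a^2 - b^2) / (2 * (-S)) := by
    apply div_nonneg (by nlinarith) (by linarith)
  have hn1 : (1:ℝ) ≤ (n:ℝ) := by linarith
  have hQn : (n:ℝ) ≤ ((s:ℝ) - τ.re)^2 := by nlinarith
  have p1 : 0 < ((s:ℝ) - τ.re)^2 + b^2 := by nlinarith
  have p2 : 0 < ((s:ℝ) - τ.re)^2 + a^2 := by nlinarith
  set Q := ((s:ℝ) - τ.re)^2 with hQ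
  have hlog : Real.log (Q + a^2) - Real.log (Q + b^2) ≤ (a^2 - b^2) / (Q + b^2) := by
    have h5 : Real.log ((Q + a^2)/(Q + b^2)) ≤ (Q + a^2)/(Q + b^2) - 1 :=
      Real.log_le_sub_one_of_pos (by positivity)
    rw [Real.log_div (ne_of_gt p2) (ne_of_gt p1)] at h5
    have : (Q + a^2)/(Q + b^2) - 1 = (a^2 - b^2) / (Q + b^2) := by
      field_simp
      ring
    linarith [h5, this ▸ h5]
  have hest : (a^2 - b^2) / (Q + b^2) < 2 * (-S) := by
    rw [div_lt_iff₀ p1]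
    have : (a^2 - b^2) / (2 * (-S)) < n := by linarith
    rw [div_lt_iff₀ (by linarith)] at this
    nlinarith
  have hLL : S < LL τ' τ s := by
    rw [LL_eq, vert_normSq, vert_normSq, hre, ← ha, ← hb', ← hQ]
    linarith
  have := le_ciSup (bdd_of_le hb) s
  rw [← hS] at this
  linarith

lemma vert_dZ {τ τ' : ℂ} (h1 : memHZ τ) (h2 : memHZ τ') (hre : τ'.re = τ.re)
    (him : τ'.im ≤ τ.im) : dZ τ τ' = Vc τ.re τ.im - Vc τ.re τ'.im := by
  have hbd1 := vert_bound1 h1 h2 hre him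
  have hbd2 := vert_bound2 h1 h2 hre him
  rw [dZ_rw h1 h2 (bdd_of_le hbd1) (bdd_of_le hbd2),
    iSup_eq_of_le _ hbd1, sup_vert_zero h1 h2 hre him, add_zero,
    LL_eq, vert_normSq, vert_normSq, hre]
  unfold Vc
  ring

lemma vert_dZ_abs {τ τ' : ℂ} (h1 : memHZ τ) (h2 : memHZ τ') (hre : τ'.re = τ.re) :
    dZ τ τ' = |Vc τ.re τ.im - Vc τ.re τ'.im| := by
  rcases le_total τ'.im τ.im with him | him
  · rw [vert_dZ h1 h2 hre him, abs_of_nonneg]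
    have := Vc_mono (x := τ.re) (by rw [← hre]; exact vert_pos h2) h2.im_nonneg him
    linarith
  · have hsym : dZ τ τ' = dZ τ' τ :=
      dZ_symm h1 h2 (bdd_of_le (vert_bound2 h2 h1 hre.symm him))
        (bdd_of_le (vert_bound1 h2 h1 hre.symm him))
    rw [hsym, vert_dZ h2 h1 hre.symm him, ← hre, abs_of_nonpos]
    · ring
    · have hu : 0 < ((round τ'.re : ℝ) - τ'.re)^2 + τ.im^2 := by rw [hre]; exact vert_pos h1
      have := Vc_mono hu h1.im_nonneg him
      linarith

lemma circ_min (c r : ℝ) (hr : 0 < r) :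
    ∃ p : ℤ, (p : ℝ) < c ∧ ∀ t : ℤ,
      (((t:ℝ)-c)^2 + r^2) * ((p:ℝ)-c) ≤ (((p:ℝ)-c)^2 + r^2) * ((t:ℝ)-c) := by
  set h : ℤ → ℝ := fun t => ((t:ℝ)-c)/(((t:ℝ)-c)^2+r^2) with hh
  have Apos : ∀ t : ℤ, 0 < ((t:ℝ)-c)^2+r^2 := fun t => by positivity
  set t₀ : ℤ := ⌊c⌋ - 1 with ht₀def
  have ht₀ : (t₀ : ℝ) < c := by
    have := Int.floor_le c
    push_cast [ht₀def]
    linarith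
  have hneg : h t₀ < 0 := div_neg_of_neg_of_pos (by linarith) (Apos t₀)
  set δ : ℝ := -h t₀ with hδdef
  have hδ : 0 < δ := by linarith
  set S : Set ℤ := {t : ℤ | h t ≤ h t₀} with hSdef
  have hSsub : S ⊆ Set.Icc ⌈c - 1/δ⌉ ⌊c⌋ := by
    intro t ht
    have ht' : h t ≤ h t₀ := ht
    have htneg : ((t:ℝ) - c) < 0 := by
      by_contra hcon
      push_neg at hcon
      have : 0 ≤ h t := div_nonneg hcon (le_of_lt (Apos t))
      linarith
    have hkey : (c - (t:ℝ)) ≥ δ * (((t:ℝ)-c)^2+r^2) := by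
      have := (div_le_iff₀ (Apos t)).1 (le_trans ht' (le_of_eq rfl))
      -- h t ≤ -δ so (t-c) ≤ -δ * A t
      have h2 : ((t:ℝ)-c) ≤ -δ * (((t:ℝ)-c)^2+r^2) := by
        have h3 : h t ≤ -δ := by rw [hδdef]; linarith
        have := (div_le_iff₀ (Apos t)).1 h3
        linarith
      linarith
    have hub : (c - (t:ℝ)) ≤ 1/δ := by
      have h4 : δ * (c - (t:ℝ))^2 ≤ δ * (((t:ℝ)-c)^2+r^2) := by nlinarith
      have h5 : δ * (c - (t:ℝ))^2 ≤ (c - (t:ℝ)) := by linarith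
      rw [le_div_iff₀ hδ]
      nlinarith
    constructor
    · rw [Int.ceil_le]; linarith
    · rw [Int.le_floor]; linarith
  have hSfin : S.Finite := Set.Finite.subset (Set.finite_Icc _ _) hSsub
  have hSne : S.Nonempty := ⟨t₀, show h t₀ ≤ h t₀ from le_rfl⟩
  obtain ⟨p, hpS, hpmin⟩ := Set.exists_min_image S h hSfin hSne
  refine ⟨p, ?_, ?_⟩
  · have hp' : h p ≤ h t₀ := hpS
    by_contra hcon
    push_neg at hcon
    have : 0 ≤ h p := div_nonneg (by linarith) (le_of_lt (Apos p))
    linarith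
  · intro t
    have hpt : h p ≤ h t := by
      by_cases htS : t ∈ S
      · exact hpmin t htS
      · have hgt : h t₀ < h t := by
          by_contra hcon
          push_neg at hcon
          exact htS hcon
        have hp' : h p ≤ h t₀ := hpS
        linarith
    have := (div_le_div_iff₀ (Apos p) (Apos t)).1 hpt
    linarith

lemma circ_max (c r : ℝ) (hr : 0 < r) :
    ∃ q : ℤ, c < (q : ℝ) ∧ ∀ t : ℤ,
      (((q:ℝ)-c)^2 + r^2) * ((t:ℝ)-c) ≤ (((t:ℝ)-c)^2 + r^2) * ((q:ℝ)-c) := by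
  obtain ⟨p, hp, hmin⟩ := circ_min (-c) r hr
  refine ⟨-p, by push_cast at hp ⊢; linarith, fun t => ?_⟩
  have := hmin (-t)
  push_cast at this ⊢
  nlinarith [this]

noncomputable def Psi (c r : ℝ) (p q : ℤ) (y : ℝ) : ℝ :=
  (Real.log ((((p:ℝ)-c)^2 + r^2) - y*((p:ℝ)-c))
   - Real.log ((((q:ℝ)-c)^2 + r^2) - y*((q:ℝ)-c))) / 2

lemma circ_normSq {τ : ℂ} {c r : ℝ} (hc : ‖τ - (c:ℂ)‖ = r) (s : ℤ) :
    Complex.normSq (τ - (s:ℂ)) = (((s:ℝ)-c)^2 + r^2) - (2*(τ.re - c))*((s:ℝ)-c) := by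
  have h1 : (τ.re - c)^2 + τ.im^2 = r^2 := by
    have h2 : Complex.normSq (τ - (c:ℂ)) = r^2 := by
      rw [← Complex.sq_norm, hc]
    rw [Complex.normSq_apply] at h2
    simp [Complex.sub_re, Complex.sub_im] at h2
    nlinarith [h2]
  rw [vert_normSq]
  linear_combination h1

lemma circ_pos {τ : ℂ} {c r : ℝ} (h : memHZ τ) (hc : ‖τ - (c:ℂ)‖ = r) (s : ℤ) :
    0 < (((s:ℝ)-c)^2 + r^2) - (2*(τ.re - c))*((s:ℝ)-c) := by
  rw [← circ_normSq hc s]; exact h.normSq_pos s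

lemma circ_bound1 {τ τ' : ℂ} {c r : ℝ} {p : ℤ} (h1 : memHZ τ) (h2 : memHZ τ')
    (hc1 : ‖τ - (c:ℂ)‖ = r) (hc2 : ‖τ' - (c:ℂ)‖ = r)
    (hpmin : ∀ t : ℤ, (((t:ℝ)-c)^2 + r^2) * ((p:ℝ)-c) ≤ (((p:ℝ)-c)^2 + r^2) * ((t:ℝ)-c))
    (hord : τ'.re ≤ τ.re) (s : ℤ) : LL τ τ' s ≤ LL τ τ' p := by
  rw [LL_eq, LL_eq, circ_normSq hc1, circ_normSq hc2, circ_normSq hc1, circ_normSq hc2]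
  have key : 0 ≤ (2*(τ.re - c) - 2*(τ'.re - c)) *
      ((((p:ℝ)-c)^2+r^2) * ((s:ℝ)-c) - ((((s:ℝ)-c)^2+r^2)) * ((p:ℝ)-c)) :=
    mul_nonneg (by linarith) (by linarith [hpmin s])
  have := log_comp (A := ((p:ℝ)-c)^2+r^2) (B := (p:ℝ)-c) (At := ((s:ℝ)-c)^2+r^2)
    (Bt := (s:ℝ)-c) (α := 2*(τ.re - c)) (β := 2*(τ'.re - c))
    (circ_pos h1 hc1 p) (circ_pos h2 hc2 p) (circ_pos h1 hc1 s) (circ_pos h2 hc2 s) key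
  linarith

lemma circ_bound2 {τ τ' : ℂ} {c r : ℝ} {q : ℤ} (h1 : memHZ τ) (h2 : memHZ τ')
    (hc1 : ‖τ - (c:ℂ)‖ = r) (hc2 : ‖τ' - (c:ℂ)‖ = r)
    (hqmax : ∀ t : ℤ, (((q:ℝ)-c)^2 + r^2) * ((t:ℝ)-c) ≤ (((t:ℝ)-c)^2 + r^2) * ((q:ℝ)-c))
    (hord : τ'.re ≤ τ.re) (s : ℤ) : LL τ' τ s ≤ LL τ' τ q := by
  rw [LL_eq, LL_eq, circ_normSq hc1, circ_normSq hc2, circ_normSq hc1, circ_normSq hc2]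
  have key : 0 ≤ (2*(τ'.re - c) - 2*(τ.re - c)) *
      ((((q:ℝ)-c)^2+r^2) * ((s:ℝ)-c) - ((((s:ℝ)-c)^2+r^2)) * ((q:ℝ)-c)) := by
    nlinarith [hqmax s]
  have := log_comp (A := ((q:ℝ)-c)^2+r^2) (B := (q:ℝ)-c) (At := ((s:ℝ)-c)^2+r^2)
    (Bt := (s:ℝ)-c) (α := 2*(τ'.re - c)) (β := 2*(τ.re - c))
    (circ_pos h2 hc2 q) (circ_pos h1 hc1 q) (circ_pos h2 hc2 s) (circ_pos h1 hc1 s) key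
  linarith

lemma circ_dZ {τ τ' : ℂ} {c r : ℝ} {p q : ℤ} (h1 : memHZ τ) (h2 : memHZ τ')
    (hc1 : ‖τ - (c:ℂ)‖ = r) (hc2 : ‖τ' - (c:ℂ)‖ = r)
    (hpmin : ∀ t : ℤ, (((t:ℝ)-c)^2 + r^2) * ((p:ℝ)-c) ≤ (((p:ℝ)-c)^2 + r^2) * ((t:ℝ)-c))
    (hqmax : ∀ t : ℤ, (((q:ℝ)-c)^2 + r^2) * ((t:ℝ)-c) ≤ (((t:ℝ)-c)^2 + r^2) * ((q:ℝ)-c))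
    (hord : τ'.re ≤ τ.re) :
    dZ τ τ' = Psi c r p q (2*(τ.re - c)) - Psi c r p q (2*(τ'.re - c)) := by
  have hbd1 := circ_bound1 h1 h2 hc1 hc2 hpmin hord
  have hbd2 := circ_bound2 h1 h2 hc1 hc2 hqmax hord
  rw [dZ_rw h1 h2 (bdd_of_le hbd1) (bdd_of_le hbd2), iSup_eq_of_le _ hbd1,
    iSup_eq_of_le _ hbd2, LL_eq, LL_eq, circ_normSq hc1, circ_normSq hc2,
    circ_normSq hc1, circ_normSq hc2]
  unfold Psi
  ring

lemma Psi_mono {c r y y' : ℝ} {p q : ℤ} (hp : (p:ℝ) < c) (hq : c < (q:ℝ))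
    (h1 : 0 < (((p:ℝ)-c)^2 + r^2) - y*((p:ℝ)-c))
    (h2 : 0 < (((p:ℝ)-c)^2 + r^2) - y'*((p:ℝ)-c))
    (h3 : 0 < (((q:ℝ)-c)^2 + r^2) - y*((q:ℝ)-c))
    (h4 : 0 < (((q:ℝ)-c)^2 + r^2) - y'*((q:ℝ)-c))
    (hyy : y' ≤ y) : Psi c r p q y' ≤ Psi c r p q y := by
  unfold Psi
  have l1 : Real.log ((((p:ℝ)-c)^2 + r^2) - y'*((p:ℝ)-c)) ≤
      Real.log ((((p:ℝ)-c)^2 + r^2) - y*((p:ℝ)-c)) :=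
    (Real.log_le_log_iff h2 h1).2 (by nlinarith)
  have l2 : Real.log ((((q:ℝ)-c)^2 + r^2) - y*((q:ℝ)-c)) ≤
      Real.log ((((q:ℝ)-c)^2 + r^2) - y'*((q:ℝ)-c)) :=
    (Real.log_le_log_iff h3 h4).2 (by nlinarith)
  linarith

lemma circ_dZ_abs {τ τ' : ℂ} {c r : ℝ} {p q : ℤ} (h1 : memHZ τ) (h2 : memHZ τ')
    (hc1 : ‖τ - (c:ℂ)‖ = r) (hc2 : ‖τ' - (c:ℂ)‖ = r)
    (hp : (p:ℝ) < c) (hq : c < (q:ℝ))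
    (hpmin : ∀ t : ℤ, (((t:ℝ)-c)^2 + r^2) * ((p:ℝ)-c) ≤ (((p:ℝ)-c)^2 + r^2) * ((t:ℝ)-c))
    (hqmax : ∀ t : ℤ, (((q:ℝ)-c)^2 + r^2) * ((t:ℝ)-c) ≤ (((t:ℝ)-c)^2 + r^2) * ((q:ℝ)-c)) :
    dZ τ τ' = |Psi c r p q (2*(τ.re - c)) - Psi c r p q (2*(τ'.re - c))| := by
  rcases le_total τ'.re τ.re with hord | hord
  · rw [circ_dZ h1 h2 hc1 hc2 hpmin hqmax hord, abs_of_nonneg]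
    have := Psi_mono hp hq (circ_pos h1 hc1 p) (circ_pos h2 hc2 p)
      (circ_pos h1 hc1 q) (circ_pos h2 hc2 q) (by linarith)
    linarith
  · have hsym := dZ_symm h1 h2
      (bdd_of_le (circ_bound2 h2 h1 hc2 hc1 hqmax hord))
      (bdd_of_le (circ_bound1 h2 h1 hc2 hc1 hpmin hord))
    rw [hsym, circ_dZ h2 h1 hc2 hc1 hpmin hqmax hord, abs_of_nonpos]
    · ring
    · have := Psi_mono hp hq (circ_pos h2 hc2 p) (circ_pos h1 hc1 p)
        (circ_pos h2 hc2 q) (circ_pos h1 hc1 q) (by linarith)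
      linarith

lemma part1 : ∀ τ₁ τ₂ τ₃ : ℂ, memHZ τ₁ → memHZ τ₂ → memHZ τ₃ → OnGeodSeg τ₁ τ₂ τ₃ →
    dZ τ₁ τ₂ = dZ τ₁ τ₃ + dZ τ₃ τ₂ := by
  intro τ₁ τ₂ τ₃ h1 h2 h3 hgeo
  rcases hgeo with ⟨hre12, hre31, him⟩ | ⟨c, r, hr, hc1, hc2, hc3, hre⟩
  · -- vertical line case
    have e12 := vert_dZ_abs h1 h2 hre12.symm
    have e13 := vert_dZ_abs h1 h3 hre31
    have e32 := vert_dZ_abs h3 h2 (by rw [hre31, hre12])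
    rw [hre31] at e32
    rw [e12, e13, e32]
    apply abs_split
    have hpos3 : 0 < ((round τ₁.re : ℝ) - τ₁.re)^2 + τ₃.im^2 := by
      have := vert_pos h3; rwa [hre31] at this
    have hpos2 : 0 < ((round τ₁.re : ℝ) - τ₁.re)^2 + τ₂.im^2 := by
      have := vert_pos h2; rwa [← hre12] at this
    rcases Set.mem_uIcc.1 him with ⟨ha, hb⟩ | ⟨ha, hb⟩
    · exact Set.mem_uIcc.2 (Or.inl ⟨Vc_mono (vert_pos h1) h1.im_nonneg ha,
        Vc_mono hpos3 h3.im_nonneg hb⟩)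
    · exact Set.mem_uIcc.2 (Or.inr ⟨Vc_mono hpos2 h2.im_nonneg ha,
        Vc_mono hpos3 h3.im_nonneg hb⟩)
  · -- circle case
    obtain ⟨p, hp, hpmin⟩ := circ_min c r hr
    obtain ⟨q, hq, hqmax⟩ := circ_max c r hr
    have e12 := circ_dZ_abs h1 h2 hc1 hc2 hp hq hpmin hqmax
    have e13 := circ_dZ_abs h1 h3 hc1 hc3 hp hq hpmin hqmax
    have e32 := circ_dZ_abs h3 h2 hc3 hc2 hp hq hpmin hqmax
    rw [e12, e13, e32]
    apply abs_split
    rcases Set.mem_uIcc.1 hre with ⟨ha, hb⟩ | ⟨ha, hb⟩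
    · exact Set.mem_uIcc.2 (Or.inl
        ⟨Psi_mono hp hq (circ_pos h3 hc3 p) (circ_pos h1 hc1 p) (circ_pos h3 hc3 q)
          (circ_pos h1 hc1 q) (by linarith),
         Psi_mono hp hq (circ_pos h2 hc2 p) (circ_pos h3 hc3 p) (circ_pos h2 hc2 q)
          (circ_pos h3 hc3 q) (by linarith)⟩)
    · exact Set.mem_uIcc.2 (Or.inr
        ⟨Psi_mono hp hq (circ_pos h3 hc3 p) (circ_pos h2 hc2 p) (circ_pos h3 hc3 q)
          (circ_pos h2 hc2 q) (by linarith),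
         Psi_mono hp hq (circ_pos h1 hc1 p) (circ_pos h3 hc3 p) (circ_pos h1 hc1 q)
          (circ_pos h3 hc3 q) (by linarith)⟩)

lemma part2_vert {τ₁ τ₂ : ℂ} (h1 : memHZ τ₁) (h2 : memHZ τ₂) (hre : τ₁.re = τ₂.re) :
    ∃ γ : ℝ → ℂ, γ 0 = τ₁ ∧ γ 1 = τ₂ ∧
      (∀ t ∈ Set.Icc (0:ℝ) 1, memHZ (γ t)) ∧
      ∀ s ∈ Set.Icc (0:ℝ) 1, ∀ t ∈ Set.Icc (0:ℝ) 1,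
        dZ (γ s) (γ t) = |s - t| * dZ τ₁ τ₂ := by
  set x := τ₁.re with hx
  set q0 := ((round x : ℝ) - x)^2 with hq0
  set v₁ := Vc x τ₁.im with hv₁
  set v₂ := Vc x τ₂.im with hv₂
  set w : ℝ → ℝ := fun t => (1-t)*v₁ + t*v₂ with hw
  set u : ℝ → ℝ := fun t => Real.sqrt (Real.exp (2 * w t) - q0) with hu
  set γ : ℝ → ℂ := fun t => (⟨x, u t⟩ : ℂ) with hγ
  have P1 : 0 < q0 + τ₁.im^2 := vert_pos h1
  have P2 : 0 < q0 + τ₂.im^2 := by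
    have := vert_pos h2; rwa [← hre] at this
  have E1 : Real.exp (2 * v₁) = q0 + τ₁.im^2 := by
    rw [hv₁]; unfold Vc
    rw [show 2 * (Real.log (((round x:ℝ) - x)^2 + τ₁.im^2) / 2)
      = Real.log (((round x:ℝ) - x)^2 + τ₁.im^2) by ring]
    rw [← hq0] at *
    exact Real.exp_log P1
  have E2 : Real.exp (2 * v₂) = q0 + τ₂.im^2 := by
    rw [hv₂]; unfold Vc
    rw [show 2 * (Real.log (((round x:ℝ) - x)^2 + τ₂.im^2) / 2)
      = Real.log (((round x:ℝ) - x)^2 + τ₂.im^2) by ring]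
    rw [← hq0] at *
    exact Real.exp_log P2
  have hkey : ∀ t ∈ Set.Icc (0:ℝ) 1,
      q0 + min (τ₁.im^2) (τ₂.im^2) ≤ Real.exp (2 * w t) ∧
      Real.exp (2 * w t) ≤ q0 + max (τ₁.im^2) (τ₂.im^2) := by
    intro t ht
    obtain ⟨ht0, ht1⟩ := ht
    rcases le_total v₁ v₂ with h | h
    · have hw1 : v₁ ≤ w t := by rw [hw]; simp only; nlinarith
      have hw2 : w t ≤ v₂ := by rw [hw]; simp only; nlinarith
      constructor
      · calc q0 + min (τ₁.im^2) (τ₂.im^2) ≤ q0 + τ₁.im^2 := by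
              have := min_le_left (τ₁.im^2) (τ₂.im^2); linarith
          _ = Real.exp (2*v₁) := E1.symm
          _ ≤ Real.exp (2 * w t) := Real.exp_le_exp.2 (by linarith)
      · calc Real.exp (2 * w t) ≤ Real.exp (2*v₂) := Real.exp_le_exp.2 (by linarith)
          _ = q0 + τ₂.im^2 := E2
          _ ≤ q0 + max (τ₁.im^2) (τ₂.im^2) := by
              have := le_max_right (τ₁.im^2) (τ₂.im^2); linarith
    · have hw1 : v₂ ≤ w t := by rw [hw]; simp only; nlinarith
      have hw2 : w t ≤ v₁ := by rw [hw]; simp only; nlinarith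
      constructor
      · calc q0 + min (τ₁.im^2) (τ₂.im^2) ≤ q0 + τ₂.im^2 := by
              have := min_le_right (τ₁.im^2) (τ₂.im^2); linarith
          _ = Real.exp (2*v₂) := E2.symm
          _ ≤ Real.exp (2 * w t) := Real.exp_le_exp.2 (by linarith)
      · calc Real.exp (2 * w t) ≤ Real.exp (2*v₁) := Real.exp_le_exp.2 (by linarith)
          _ = q0 + τ₁.im^2 := E1
          _ ≤ q0 + max (τ₁.im^2) (τ₂.im^2) := by
              have := le_max_left (τ₁.im^2) (τ₂.im^2); linarith
  have hmin0 : 0 ≤ min (τ₁.im^2) (τ₂.im^2) := le_min (sq_nonneg _) (sq_nonneg _)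
  have husq : ∀ t ∈ Set.Icc (0:ℝ) 1, (u t)^2 = Real.exp (2 * w t) - q0 := by
    intro t ht
    have := (hkey t ht).1
    rw [hu]
    exact Real.sq_sqrt (by linarith)
  have hVu : ∀ t ∈ Set.Icc (0:ℝ) 1, Vc x (u t) = w t := by
    intro t ht
    unfold Vc
    rw [← hq0, husq t ht,
      show q0 + (Real.exp (2 * w t) - q0) = Real.exp (2 * w t) by ring,
      Real.log_exp]
    ring
  have hu0 : ∀ t ∈ Set.Icc (0:ℝ) 1, 0 ≤ u t := fun t _ => Real.sqrt_nonneg _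
  have hmem : ∀ t ∈ Set.Icc (0:ℝ) 1, memHZ (γ t) := by
    intro t ht
    rcases lt_or_eq_of_le (hu0 t ht) with hpos | hzero
    · exact Or.inl hpos
    · right
      refine ⟨hzero.symm, ?_⟩
      have hEq : Real.exp (2 * w t) - q0 = 0 := by
        have := husq t ht; rw [← hzero] at this; nlinarith [this]
      have hminz : min (τ₁.im^2) (τ₂.im^2) ≤ 0 := by
        have := (hkey t ht).1; linarith
      have him0 : τ₁.im = 0 ∨ τ₂.im = 0 := by
        rcases min_cases (τ₁.im^2) (τ₂.im^2) with ⟨hm, _⟩ | ⟨hm, _⟩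
        · left; nlinarith [hm ▸ hminz]
        · right; nlinarith [hm ▸ hminz]
      have hxint : ∀ n : ℤ, x ≠ (n : ℝ) := by
        rcases him0 with h0 | h0
        · rcases h1 with hl | ⟨_, hz⟩
          · exact absurd h0 (ne_of_gt hl)
          · exact hz
        · rcases h2 with hl | ⟨_, hz⟩
          · exact absurd h0 (ne_of_gt hl)
          · intro n; rw [hre]; exact hz n
      exact hxint
  have hdZγ : ∀ s ∈ Set.Icc (0:ℝ) 1, ∀ t ∈ Set.Icc (0:ℝ) 1,
      dZ (γ s) (γ t) = |s - t| * dZ τ₁ τ₂ := by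
    intro s hs t ht
    have e := vert_dZ_abs (hmem s hs) (hmem t ht) (rfl : (γ t).re = (γ s).re)
    have hres : (γ s).re = x := rfl
    have hims : (γ s).im = u s := rfl
    have himt : (γ t).im = u t := rfl
    rw [e, hres, hims, himt, hVu s hs, hVu t ht,
      vert_dZ_abs h1 h2 hre.symm, ← hv₁, ← hv₂]
    rw [show w s - w t = (s - t) * (v₂ - v₁) by rw [hw]; ring, abs_mul, abs_sub_comm v₂ v₁]
  refine ⟨γ, ?_, ?_, hmem, hdZγ⟩
  · have hw0 : w 0 = v₁ := by rw [hw]; ring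
    have : u 0 = τ₁.im := by
      rw [hu]; simp only
      rw [hw0, E1, show q0 + τ₁.im^2 - q0 = τ₁.im^2 by ring, Real.sqrt_sq h1.im_nonneg]
    apply Complex.ext
    · rfl
    · exact this
  · have hw1 : w 1 = v₂ := by rw [hw]; ring
    have : u 1 = τ₂.im := by
      rw [hu]; simp only
      rw [hw1, E2, show q0 + τ₂.im^2 - q0 = τ₂.im^2 by ring, Real.sqrt_sq h2.im_nonneg]
    apply Complex.ext
    · exact hre
    · exact this

lemma Y_spec {Ap Bp Aq Bq Ev : ℝ} (hD : Ev * Bq - Bp ≠ 0) :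
    Ap - ((Ev * Aq - Ap)/(Ev * Bq - Bp)) * Bp = Ev * (Aq - ((Ev * Aq - Ap)/(Ev * Bq - Bp)) * Bq) := by
  field_simp
  ring

lemma Y_fix {Ap Bp Aq Bq a : ℝ} (hNq : Aq - a*Bq ≠ 0)
    (hD : (Ap - a*Bp)/(Aq - a*Bq) * Bq - Bp ≠ 0) :
    ((Ap - a*Bp)/(Aq - a*Bq) * Aq - Ap) / ((Ap - a*Bp)/(Aq - a*Bq) * Bq - Bp) = a := by
  rw [div_eq_iff hD]
  field_simp
  ring

lemma Y_mono {Ap Bp Aq Bq E E' : ℝ} (hPQ : 0 ≤ Ap*Bq - Aq*Bp)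
    (hD : 0 < E * Bq - Bp) (hD' : 0 < E' * Bq - Bp) (hEE : E ≤ E') :
    (E * Aq - Ap)/(E * Bq - Bp) ≤ (E' * Aq - Ap)/(E' * Bq - Bp) := by
  rw [div_le_div_iff₀ hD hD']
  nlinarith

lemma Psi_exp {c r y : ℝ} {p q : ℤ} (hNp : 0 < (((p:ℝ)-c)^2+r^2) - y*((p:ℝ)-c))
    (hNq : 0 < (((q:ℝ)-c)^2+r^2) - y*((q:ℝ)-c)) :
    Real.exp (2 * Psi c r p q y)
      = ((((p:ℝ)-c)^2+r^2) - y*((p:ℝ)-c)) / ((((q:ℝ)-c)^2+r^2) - y*((q:ℝ)-c)) := by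
  unfold Psi
  rw [show (2:ℝ) * ((Real.log ((((p:ℝ)-c)^2+r^2) - y*((p:ℝ)-c))
      - Real.log ((((q:ℝ)-c)^2+r^2) - y*((q:ℝ)-c)))/2)
    = Real.log ((((p:ℝ)-c)^2+r^2) - y*((p:ℝ)-c))
      - Real.log ((((q:ℝ)-c)^2+r^2) - y*((q:ℝ)-c)) from by ring]
  rw [Real.exp_sub, Real.exp_log hNp, Real.exp_log hNq]

lemma Psi_eq {c r y E : ℝ} {p q : ℤ}
    (hNq : 0 < (((q:ℝ)-c)^2+r^2) - y*((q:ℝ)-c)) (hE : 0 < E)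
    (heq : (((p:ℝ)-c)^2+r^2) - y*((p:ℝ)-c) = E * ((((q:ℝ)-c)^2+r^2) - y*((q:ℝ)-c))) :
    Psi c r p q y = Real.log E / 2 := by
  unfold Psi
  rw [heq, Real.log_mul (ne_of_gt hE) (ne_of_gt hNq)]
  ring

lemma on_circle_sq {τ : ℂ} {c r : ℝ} (hc : ‖τ - (c:ℂ)‖ = r) :
    (τ.re - c)^2 + τ.im^2 = r^2 := by
  have h2 : Complex.normSq (τ - (c:ℂ)) = r^2 := by rw [← Complex.sq_norm, hc]
  rw [Complex.normSq_apply] at h2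
  simp [Complex.sub_re, Complex.sub_im] at h2
  nlinarith [h2]

set_option maxHeartbeats 1000000 in
lemma Dpos {Ev Bq Bp : ℝ} (hE : 0 < Ev) (hq : 0 < Bq) (hp : Bp < 0) :
    0 < Ev * Bq - Bp := by nlinarith

lemma bound_a {x im r : ℝ} (hr : 0 < r) (hsq : x^2 + im^2 = r^2) :
    -(2*r) ≤ 2*x ∧ 2*x ≤ 2*r := by
  constructor <;> nlinarith [sq_nonneg (x+r), sq_nonneg (x-r), sq_nonneg im]

lemma sqrt_arg_nonneg {yv r : ℝ} (h1 : -(2*r) ≤ yv) (h2 : yv ≤ 2*r) :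
    0 ≤ r^2 - yv^2/4 := by nlinarith

lemma ns_help {c a b r : ℝ} (h : b^2 = r^2 - a^2/4) :
    (c + a/2 - c) * (c + a/2 - c) + b * b = r^2 := by linear_combination h

lemma part2_circ {τ₁ τ₂ : ℂ} {c r : ℝ} (h1 : memHZ τ₁) (h2 : memHZ τ₂) (hr : 0 < r)
    (hc1 : ‖τ₁ - (c:ℂ)‖ = r) (hc2 : ‖τ₂ - (c:ℂ)‖ = r) :
    ∃ γ : ℝ → ℂ, γ 0 = τ₁ ∧ γ 1 = τ₂ ∧
      (∀ t ∈ Set.Icc (0:ℝ) 1, memHZ (γ t)) ∧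
      ∀ s ∈ Set.Icc (0:ℝ) 1, ∀ t ∈ Set.Icc (0:ℝ) 1,
        dZ (γ s) (γ t) = |s - t| * dZ τ₁ τ₂ := by
  obtain ⟨p, hp, hpmin⟩ := circ_min c r hr
  obtain ⟨q, hq, hqmax⟩ := circ_max c r hr
  have hBpneg : (p:ℝ) - c < 0 := by linarith
  have hBqpos : (0:ℝ) < (q:ℝ) - c := by linarith
  have hPQ : (0:ℝ) ≤ (((p:ℝ)-c)^2+r^2) * ((q:ℝ)-c) - (((q:ℝ)-c)^2+r^2) * ((p:ℝ)-c) := by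
    nlinarith
  obtain ⟨a₁, ha₁⟩ : ∃ x : ℝ, x = 2*(τ₁.re - c) := ⟨_, rfl⟩
  obtain ⟨a₂, ha₂⟩ : ∃ x : ℝ, x = 2*(τ₂.re - c) := ⟨_, rfl⟩
  have pos1p : 0 < (((p:ℝ)-c)^2+r^2) - a₁*((p:ℝ)-c) := by rw [ha₁]; exact circ_pos h1 hc1 p
  have pos1q : 0 < (((q:ℝ)-c)^2+r^2) - a₁*((q:ℝ)-c) := by rw [ha₁]; exact circ_pos h1 hc1 q
  have pos2p : 0 < (((p:ℝ)-c)^2+r^2) - a₂*((p:ℝ)-c) := by rw [ha₂]; exact circ_pos h2 hc2 p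
  have pos2q : 0 < (((q:ℝ)-c)^2+r^2) - a₂*((q:ℝ)-c) := by rw [ha₂]; exact circ_pos h2 hc2 q
  obtain ⟨Ψ₁, hΨ₁⟩ : ∃ x : ℝ, x = Psi c r p q a₁ := ⟨_, rfl⟩
  obtain ⟨Ψ₂, hΨ₂⟩ : ∃ x : ℝ, x = Psi c r p q a₂ := ⟨_, rfl⟩
  obtain ⟨w, hw⟩ : ∃ f : ℝ → ℝ, f = fun t => (1-t)*Ψ₁ + t*Ψ₂ := ⟨_, rfl⟩
  obtain ⟨E, hE⟩ : ∃ f : ℝ → ℝ, f = fun t => Real.exp (2 * w t) := ⟨_, rfl⟩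
  obtain ⟨y, hy⟩ : ∃ f : ℝ → ℝ, f = fun t =>
    (E t * (((q:ℝ)-c)^2+r^2) - (((p:ℝ)-c)^2+r^2)) / (E t * ((q:ℝ)-c) - ((p:ℝ)-c)) := ⟨_, rfl⟩
  obtain ⟨γ, hγ⟩ : ∃ f : ℝ → ℂ, f = fun t =>
    (⟨c + y t / 2, Real.sqrt (r^2 - (y t)^2/4)⟩ : ℂ) := ⟨_, rfl⟩
  have hEpos : ∀ t, 0 < E t := by intro t; simp only [hE]; exact Real.exp_pos _
  have hDt : ∀ t, 0 < E t * ((q:ℝ)-c) - ((p:ℝ)-c) :=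
    fun t => Dpos (hEpos t) hBqpos hBpneg
  have hw0 : w 0 = Ψ₁ := by simp only [hw]; ring
  have hw1 : w 1 = Ψ₂ := by simp only [hw]; ring
  have hE0 : E 0 = ((((p:ℝ)-c)^2+r^2) - a₁*((p:ℝ)-c)) / ((((q:ℝ)-c)^2+r^2) - a₁*((q:ℝ)-c)) := by
    simp only [hE]
    rw [hw0, hΨ₁]
    exact Psi_exp pos1p pos1q
  have hE1 : E 1 = ((((p:ℝ)-c)^2+r^2) - a₂*((p:ℝ)-c)) / ((((q:ℝ)-c)^2+r^2) - a₂*((q:ℝ)-c)) := by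
    simp only [hE]
    rw [hw1, hΨ₂]
    exact Psi_exp pos2p pos2q
  have hy0 : y 0 = a₁ := by
    simp only [hy]
    rw [hE0]
    exact Y_fix (ne_of_gt pos1q) (ne_of_gt (by rw [← hE0]; exact hDt 0))
  have hy1 : y 1 = a₂ := by
    simp only [hy]
    rw [hE1]
    exact Y_fix (ne_of_gt pos2q) (ne_of_gt (by rw [← hE1]; exact hDt 1))
  have hymem : ∀ t ∈ Set.Icc (0:ℝ) 1, y t ∈ Set.uIcc a₁ a₂ := by
    intro t ht
    obtain ⟨ht0, ht1⟩ := ht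
    rcases le_total Ψ₁ Ψ₂ with h | h
    · have hwl : w 0 ≤ w t := by
        rw [hw0]; simp only [hw]
        have hm := mul_nonneg ht0 (sub_nonneg.2 h)
        linarith
      have hwu : w t ≤ w 1 := by
        rw [hw1]; simp only [hw]
        have hm := mul_nonneg (by linarith : (0:ℝ) ≤ 1 - t) (sub_nonneg.2 h)
        linarith
      have hEl : E 0 ≤ E t := by simp only [hE]; exact Real.exp_le_exp.2 (by linarith)
      have hEu : E t ≤ E 1 := by simp only [hE]; exact Real.exp_le_exp.2 (by linarith)
      have m1 : y 0 ≤ y t := by simp only [hy]; exact Y_mono hPQ (hDt 0) (hDt t) hEl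
      have m2 : y t ≤ y 1 := by simp only [hy]; exact Y_mono hPQ (hDt t) (hDt 1) hEu
      rw [hy0] at m1; rw [hy1] at m2
      exact Set.mem_uIcc.2 (Or.inl ⟨m1, m2⟩)
    · have hwl : w 1 ≤ w t := by
        rw [hw1]; simp only [hw]
        have hm := mul_nonneg (by linarith : (0:ℝ) ≤ 1 - t) (sub_nonneg.2 h)
        linarith
      have hwu : w t ≤ w 0 := by
        rw [hw0]; simp only [hw]
        have hm := mul_nonneg ht0 (sub_nonneg.2 h)
        linarith
      have hEl : E 1 ≤ E t := by simp only [hE]; exact Real.exp_le_exp.2 (by linarith)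
      have hEu : E t ≤ E 0 := by simp only [hE]; exact Real.exp_le_exp.2 (by linarith)
      have m1 : y 1 ≤ y t := by simp only [hy]; exact Y_mono hPQ (hDt 1) (hDt t) hEl
      have m2 : y t ≤ y 0 := by simp only [hy]; exact Y_mono hPQ (hDt t) (hDt 0) hEu
      rw [hy1] at m1; rw [hy0] at m2
      exact Set.mem_uIcc.2 (Or.inr ⟨m1, m2⟩)
  have hNqy : ∀ t ∈ Set.Icc (0:ℝ) 1, 0 < (((q:ℝ)-c)^2+r^2) - y t*((q:ℝ)-c) :=
    fun t ht => affine_pos pos1q pos2q (hymem t ht)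
  have hsolve : ∀ t, (((p:ℝ)-c)^2+r^2) - y t * ((p:ℝ)-c)
      = E t * ((((q:ℝ)-c)^2+r^2) - y t * ((q:ℝ)-c)) := by
    intro t
    simp only [hy]
    exact Y_spec (ne_of_gt (hDt t))
  have hPsiy : ∀ t ∈ Set.Icc (0:ℝ) 1, Psi c r p q (y t) = w t := by
    intro t ht
    rw [Psi_eq (hNqy t ht) (hEpos t) (hsolve t)]
    simp only [hE]
    rw [Real.log_exp]
    ring
  have hsq1 : (τ₁.re - c)^2 + τ₁.im^2 = r^2 := on_circle_sq hc1
  have hsq2 : (τ₂.re - c)^2 + τ₂.im^2 = r^2 := on_circle_sq hc2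
  have hb1 : -(2*r) ≤ a₁ ∧ a₁ ≤ 2*r := by
    rw [ha₁]; exact bound_a hr hsq1
  have hb2 : -(2*r) ≤ a₂ ∧ a₂ ≤ 2*r := by
    rw [ha₂]; exact bound_a hr hsq2
  have hyb : ∀ t ∈ Set.Icc (0:ℝ) 1, -(2*r) ≤ y t ∧ y t ≤ 2*r := by
    intro t ht
    rcases Set.mem_uIcc.1 (hymem t ht) with ⟨hl, hu⟩ | ⟨hl, hu⟩
    · exact ⟨by linarith [hb1.1], by linarith [hb2.2]⟩
    · exact ⟨by linarith [hb2.1], by linarith [hb1.2]⟩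
  have hsqrt_arg : ∀ t ∈ Set.Icc (0:ℝ) 1, 0 ≤ r^2 - (y t)^2/4 :=
    fun t ht => sqrt_arg_nonneg (hyb t ht).1 (hyb t ht).2
  have hre_γ : ∀ t, (γ t).re = c + y t / 2 := by intro t; simp only [hγ]
  have him_γ : ∀ t, (γ t).im = Real.sqrt (r^2 - (y t)^2/4) := by intro t; simp only [hγ]
  have him_sq : ∀ t ∈ Set.Icc (0:ℝ) 1, ((γ t).im)^2 = r^2 - (y t)^2/4 := by
    intro t ht
    rw [him_γ t]
    exact Real.sq_sqrt (hsqrt_arg t ht)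
  have honc : ∀ t ∈ Set.Icc (0:ℝ) 1, ‖γ t - (c:ℂ)‖ = r := by
    intro t ht
    rw [Complex.norm_def]
    have hns : Complex.normSq (γ t - (c:ℂ)) = r^2 := by
      rw [Complex.normSq_apply]
      simp only [Complex.sub_re, Complex.sub_im, Complex.ofReal_re, Complex.ofReal_im,
        sub_zero]
      rw [hre_γ t]
      exact ns_help (him_sq t ht)
    rw [hns, Real.sqrt_sq hr.le]
  have haγ : ∀ t, 2*((γ t).re - c) = y t := by
    intro t; rw [hre_γ t]; ring
  have hmemγ : ∀ t ∈ Set.Icc (0:ℝ) 1, memHZ (γ t) := by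
    intro t ht
    have him0 : 0 ≤ (γ t).im := by rw [him_γ t]; exact Real.sqrt_nonneg _
    rcases lt_or_eq_of_le him0 with hpos | hzero
    · exact Or.inl hpos
    · right
      refine ⟨hzero.symm, ?_⟩
      have hyy : (y t)^2 = 4*r^2 := by
        have h6 := him_sq t ht
        rw [← hzero] at h6
        linear_combination 4*h6
      have hcase : y t = 2*r ∨ y t = -(2*r) := by
        have h7 : (y t - 2*r)*(y t + 2*r) = 0 := by linear_combination hyy
        rcases mul_eq_zero.1 h7 with h' | h'
        · left; linarith
        · right; linarith
      have key : ∃ i : ℂ, memHZ i ∧ i.im = 0 ∧ i.re = (γ t).re := by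
        rcases hcase with hyv | hyv
        · have hmax : a₁ = 2*r ∨ a₂ = 2*r := by
            rcases Set.mem_uIcc.1 (hymem t ht) with ⟨hl, hu⟩ | ⟨hl, hu⟩
            · right; rw [hyv] at hu; have := hb2.2; linarith
            · left; rw [hyv] at hu; have := hb1.2; linarith
          rcases hmax with hv | hv
          · refine ⟨τ₁, h1, ?_, ?_⟩
            · have h8 : τ₁.re - c = r := by rw [ha₁] at hv; linarith
              have h10 : τ₁.im^2 = 0 := by linear_combination hsq1 - (τ₁.re - c + r) * h8
              exact pow_eq_zero_iff (two_ne_zero (α := ℕ)) |>.1 h10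
            · have hrc : τ₁.re - c = r := by rw [ha₁] at hv; linarith
              rw [hre_γ t, hyv]; linarith
          · refine ⟨τ₂, h2, ?_, ?_⟩
            · have h8 : τ₂.re - c = r := by rw [ha₂] at hv; linarith
              have h10 : τ₂.im^2 = 0 := by linear_combination hsq2 - (τ₂.re - c + r) * h8
              exact pow_eq_zero_iff (two_ne_zero (α := ℕ)) |>.1 h10
            · have hrc : τ₂.re - c = r := by rw [ha₂] at hv; linarith
              rw [hre_γ t, hyv]; linarith
        · have hmin : a₁ = -(2*r) ∨ a₂ = -(2*r) := by
            rcases Set.mem_uIcc.1 (hymem t ht) with ⟨hl, hu⟩ | ⟨hl, hu⟩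
            · left; rw [hyv] at hl; have := hb1.1; linarith
            · right; rw [hyv] at hl; have := hb2.1; linarith
          rcases hmin with hv | hv
          · refine ⟨τ₁, h1, ?_, ?_⟩
            · have h8 : τ₁.re - c = -r := by rw [ha₁] at hv; linarith
              have h10 : τ₁.im^2 = 0 := by linear_combination hsq1 - (τ₁.re - c - r) * h8
              exact pow_eq_zero_iff (two_ne_zero (α := ℕ)) |>.1 h10
            · have hrc : τ₁.re - c = -r := by rw [ha₁] at hv; linarith
              rw [hre_γ t, hyv]; linarith
          · refine ⟨τ₂, h2, ?_, ?_⟩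
            · have h8 : τ₂.re - c = -r := by rw [ha₂] at hv; linarith
              have h10 : τ₂.im^2 = 0 := by linear_combination hsq2 - (τ₂.re - c - r) * h8
              exact pow_eq_zero_iff (two_ne_zero (α := ℕ)) |>.1 h10
            · have hrc : τ₂.re - c = -r := by rw [ha₂] at hv; linarith
              rw [hre_γ t, hyv]; linarith
      obtain ⟨i, hi, hiim, hire⟩ := key
      rcases hi with hl | ⟨_, hz⟩
      · rw [hiim] at hl; exact absurd hl (lt_irrefl 0)
      · intro n; rw [← hire]; exact hz n
  refine ⟨γ, ?_, ?_, hmemγ, ?_⟩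
  · apply Complex.ext
    · rw [hre_γ 0, hy0, ha₁]; ring
    · rw [him_γ 0, hy0]
      have h9 : r^2 - a₁^2/4 = τ₁.im^2 := by rw [ha₁]; linear_combination -hsq1
      rw [h9, Real.sqrt_sq h1.im_nonneg]
  · apply Complex.ext
    · rw [hre_γ 1, hy1, ha₂]; ring
    · rw [him_γ 1, hy1]
      have h9 : r^2 - a₂^2/4 = τ₂.im^2 := by rw [ha₂]; linear_combination -hsq2
      rw [h9, Real.sqrt_sq h2.im_nonneg]
  · intro s hs t ht
    have e := circ_dZ_abs (hmemγ s hs) (hmemγ t ht) (honc s hs) (honc t ht) hp hq hpmin hqmax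
    rw [e, haγ s, haγ t, hPsiy s hs, hPsiy t ht,
      circ_dZ_abs h1 h2 hc1 hc2 hp hq hpmin hqmax, ← ha₁, ← ha₂, ← hΨ₁, ← hΨ₂]
    rw [show w s - w t = (s - t) * (Ψ₂ - Ψ₁) from by simp only [hw]; ring, abs_mul, abs_sub_comm Ψ₂ Ψ₁]

theorem stmt_12 :
    (∀ τ₁ τ₂ τ₃ : ℂ, memHZ τ₁ → memHZ τ₂ → memHZ τ₃ → OnGeodSeg τ₁ τ₂ τ₃ →
      dZ τ₁ τ₂ = dZ τ₁ τ₃ + dZ τ₃ τ₂) ∧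
    (∀ τ₁ τ₂ : ℂ, memHZ τ₁ → memHZ τ₂ →
      ∃ γ : ℝ → ℂ, γ 0 = τ₁ ∧ γ 1 = τ₂ ∧
        (∀ t ∈ Set.Icc (0:ℝ) 1, memHZ (γ t)) ∧
        ∀ s ∈ Set.Icc (0:ℝ) 1, ∀ t ∈ Set.Icc (0:ℝ) 1,
          dZ (γ s) (γ t) = |s - t| * dZ τ₁ τ₂) := by
  refine ⟨part1, ?_⟩
  intro τ₁ τ₂ h1 h2
  by_cases hre : τ₁.re = τ₂.re
  · exact part2_vert h1 h2 hre
  · have hden : τ₁.re - τ₂.re ≠ 0 := sub_ne_zero.2 hre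
    obtain ⟨c, hc⟩ : ∃ x : ℝ,
        x = (τ₁.re^2 + τ₁.im^2 - τ₂.re^2 - τ₂.im^2) / (2*(τ₁.re - τ₂.re)) := ⟨_, rfl⟩
    have hkey : 2*c*(τ₁.re - τ₂.re) = τ₁.re^2 + τ₁.im^2 - τ₂.re^2 - τ₂.im^2 := by
      rw [hc]; field_simp
    have hsqeq : (τ₂.re - c)^2 + τ₂.im^2 = (τ₁.re - c)^2 + τ₁.im^2 := by
      linear_combination hkey
    obtain ⟨r, hrdef⟩ : ∃ x : ℝ, x = Real.sqrt ((τ₁.re - c)^2 + τ₁.im^2) := ⟨_, rfl⟩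
    have hns1 : Complex.normSq (τ₁ - (c:ℂ)) = (τ₁.re - c)^2 + τ₁.im^2 := by
      simp [Complex.normSq_apply, Complex.sub_re, Complex.sub_im]; ring
    have hns2 : Complex.normSq (τ₂ - (c:ℂ)) = (τ₂.re - c)^2 + τ₂.im^2 := by
      simp [Complex.normSq_apply, Complex.sub_re, Complex.sub_im]; ring
    have habs1 : ‖τ₁ - (c:ℂ)‖ = r := by
      rw [Complex.norm_def, hns1, hrdef]
    have habs2 : ‖τ₂ - (c:ℂ)‖ = r := by
      rw [Complex.norm_def, hns2, hsqeq, hrdef]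
    have hr0 : 0 ≤ r := by rw [hrdef]; exact Real.sqrt_nonneg _
    have hr : 0 < r := by
      rcases eq_or_lt_of_le hr0 with heq | h
      · exfalso
        have hsz : Real.sqrt ((τ₁.re - c)^2 + τ₁.im^2) = 0 := hrdef.symm.trans heq.symm
        have hle : (τ₁.re - c)^2 + τ₁.im^2 ≤ 0 := Real.sqrt_eq_zero'.1 hsz
        have s1 := sq_nonneg (τ₁.re - c)
        have s2 := sq_nonneg τ₁.im
        have s3 := sq_nonneg (τ₂.re - c)
        have s4 := sq_nonneg τ₂.im
        have e1 : (τ₁.re - c)^2 = 0 := by linarith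
        have e2 : (τ₂.re - c)^2 = 0 := by linarith [hsqeq]
        apply hre
        have f1 : τ₁.re - c = 0 := pow_eq_zero_iff (two_ne_zero (α := ℕ)) |>.1 e1
        have f2 : τ₂.re - c = 0 := pow_eq_zero_iff (two_ne_zero (α := ℕ)) |>.1 e2
        linarith
      · exact h
    exact part2_circ h1 h2 hr habs1 habs2
end

section
/- The metric space (ℍ ∪ (ℝ\ℤ), d_ℤ) is not uniquely geodesic: there exist two points joined by two distinct geodesics. Consequently it is not a CAT(0) space. -/
lemma memHZ_of (τ : ℂ) (h0 : 0 ≤ τ.im) (h1 : 0 < τ.re) (h2 : τ.re < 1) : memHZ τ := by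
  rcases h0.lt_or_eq with h | h
  · exact Or.inl h
  · refine Or.inr ⟨h.symm, fun n hn => ?_⟩
    rw [hn] at h1 h2
    have hn1 : (0:ℤ) < n := by exact_mod_cast h1
    have hn2 : n < (1:ℤ) := by exact_mod_cast h2
    omega

lemma memHZ_abs_pos {τ : ℂ} (h : memHZ τ) (s : ℤ) : 0 < ‖τ - (s:ℂ)‖ := by
  rw [norm_pos_iff, sub_ne_zero]
  intro he
  rcases h with h | ⟨h1, h2⟩
  · rw [he] at h; simp at h
  · exact h2 s (by rw [he]; simp)


lemma abs_sq_sub_int (p : ℂ) (s : ℤ) :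
    (‖p - (s:ℂ)‖)^2 = (‖p‖)^2 - 2*(s:ℝ)*p.re + (s:ℝ)^2 := by
  rw [Complex.sq_norm, Complex.sq_norm, Complex.normSq_apply, Complex.normSq_apply]
  simp [Complex.sub_re, Complex.sub_im]
  ring

lemma keyA (p q : ℂ)
    (hb : |2*(p.re*(‖q‖)^2 - q.re*(‖p‖)^2)| ≤
      (‖p‖)^2 - (‖q‖)^2) (s : ℤ) :
    ‖p - (s:ℂ)‖ * ‖q‖ ≤ ‖p‖ * ‖q - (s:ℂ)‖ := by
  set b : ℝ := 2*(p.re*(‖q‖)^2 - q.re*(‖p‖)^2) with hbdef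
  have ha : (0:ℝ) ≤ (‖p‖)^2 - (‖q‖)^2 := le_trans (abs_nonneg _) hb
  have hs : |(s:ℝ)| ≤ (s:ℝ)^2 := by
    rcases eq_or_ne s 0 with h | h
    · simp [h]
    · have h1 : (1:ℝ) ≤ |(s:ℝ)| := by
        have h2 : (1:ℤ) ≤ |s| := Int.one_le_abs h
        calc (1:ℝ) ≤ ((|s| : ℤ) : ℝ) := by exact_mod_cast h2
        _ = |(s:ℝ)| := by push_cast; rfl
      nlinarith [abs_nonneg (s:ℝ), sq_abs (s:ℝ)]
  have fact1 : |(s:ℝ) * b| ≤ |(s:ℝ)| * ((‖p‖)^2 - (‖q‖)^2) := by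
    rw [abs_mul]; exact mul_le_mul_of_nonneg_left hb (abs_nonneg _)
  have fact2 : |(s:ℝ)| * ((‖p‖)^2 - (‖q‖)^2) ≤
      (s:ℝ)^2 * ((‖p‖)^2 - (‖q‖)^2) :=
    mul_le_mul_of_nonneg_right hs ha
  have fact3 : -((s:ℝ) * b) ≤ |(s:ℝ) * b| := neg_le_abs _
  have key : (‖p - (s:ℂ)‖ * ‖q‖)^2 ≤
      (‖p‖ * ‖q - (s:ℂ)‖)^2 := by
    have e : (‖p‖ * ‖q - (s:ℂ)‖)^2
        - (‖p - (s:ℂ)‖ * ‖q‖)^2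
        = (s:ℝ)^2*((‖p‖)^2 - (‖q‖)^2) + (s:ℝ)*b := by
      rw [mul_pow, mul_pow, abs_sq_sub_int, abs_sq_sub_int]; ring
    nlinarith [fact1, fact2, fact3]
  have h1 : 0 ≤ ‖p - (s:ℂ)‖ * ‖q‖ := by positivity
  have h2 : 0 ≤ ‖p‖ * ‖q - (s:ℂ)‖ := by positivity
  nlinarith [key, h1, h2]

lemma dZ_eq_s13 (p q : ℂ) (hp : ∀ s : ℤ, 0 < ‖p - (s:ℂ)‖)
    (hq : ∀ s : ℤ, 0 < ‖q - (s:ℂ)‖)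
    (H0 : ∀ s : ℤ, ‖p - (s:ℂ)‖ * ‖q‖ ≤
      ‖p‖ * ‖q - (s:ℂ)‖)
    (H1 : ∀ s : ℤ, ‖q - (s:ℂ)‖ * ‖p - 1‖ ≤
      ‖q - 1‖ * ‖p - (s:ℂ)‖) :
    dZ q p = Real.log (‖p‖ * ‖q - 1‖ /
      (‖q‖ * ‖p - 1‖)) ∧
    dZ p q = Real.log (‖p‖ * ‖q - 1‖ /
      (‖q‖ * ‖p - 1‖)) := by
  have hp0 : 0 < ‖p‖ := by have := hp 0; simpa using this
  have hq0 : 0 < ‖q‖ := by have := hq 0; simpa using this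
  have hp1 : 0 < ‖p - 1‖ := by have := hp 1; simpa using this
  have hq1 : 0 < ‖q - 1‖ := by have := hq 1; simpa using this
  set L : ℤ → ℝ := fun s => Real.log (‖p - (s:ℂ)‖) - Real.log (‖q - (s:ℂ)‖) with hL
  set ub : ℝ := Real.log (‖p‖) - Real.log (‖q‖) with hub
  set lb : ℝ := Real.log (‖p - 1‖) - Real.log (‖q - 1‖) with hlb
  have hL0 : ∀ s, L s ≤ ub := by
    intro s
    have := Real.log_le_log (mul_pos (hp s) hq0) (H0 s)
    rw [Real.log_mul (ne_of_gt (hp s)) (ne_of_gt hq0),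
        Real.log_mul (ne_of_gt hp0) (ne_of_gt (hq s))] at this
    simp only [hL, hub]; linarith
  have hL1 : ∀ s, lb ≤ L s := by
    intro s
    have := Real.log_le_log (mul_pos (hq s) hp1) (H1 s)
    rw [Real.log_mul (ne_of_gt (hq s)) (ne_of_gt hp1),
        Real.log_mul (ne_of_gt hq1) (ne_of_gt (hp s))] at this
    simp only [hL, hlb]; linarith
  have hLz : L 0 = ub := by simp [hL, hub]
  have hLo : L 1 = lb := by simp [hL, hlb]
  have logeq : ub - lb = Real.log (‖p‖ * ‖q - 1‖ /
      (‖q‖ * ‖p - 1‖)) := by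
    rw [Real.log_div (ne_of_gt (mul_pos hp0 hq1)) (ne_of_gt (mul_pos hq0 hp1)),
        Real.log_mul (ne_of_gt hp0) (ne_of_gt hq1),
        Real.log_mul (ne_of_gt hq0) (ne_of_gt hp1)]
    simp only [hub, hlb]; ring
  constructor
  · -- dZ q p = ⨆ s₁ ⨆ s₂ (L s₁ - L s₂)
    have body : ∀ s₁ s₂ : ℤ,
        Real.log ((‖q - (s₂:ℂ)‖ * ‖p - (s₁:ℂ)‖) /
          (‖p - (s₂:ℂ)‖ * ‖q - (s₁:ℂ)‖)) = L s₁ - L s₂ := by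
      intro s₁ s₂
      rw [Real.log_div (ne_of_gt (mul_pos (hq s₂) (hp s₁))) (ne_of_gt (mul_pos (hp s₂) (hq s₁))),
          Real.log_mul (ne_of_gt (hq s₂)) (ne_of_gt (hp s₁)),
          Real.log_mul (ne_of_gt (hp s₂)) (ne_of_gt (hq s₁))]
      simp only [hL]; ring
    have step1 : dZ q p = ⨆ s₁ : ℤ, ⨆ s₂ : ℤ, (L s₁ - L s₂) := by
      unfold dZ
      exact iSup_congr fun s₁ => iSup_congr fun s₂ => body s₁ s₂
    have inner : ∀ s₁ : ℤ, (⨆ s₂ : ℤ, (L s₁ - L s₂)) = L s₁ - lb := by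
      intro s₁
      apply le_antisymm
      · exact ciSup_le fun s₂ => by show L s₁ - L s₂ ≤ L s₁ - lb; linarith [hL1 s₂]
      · have hbdd : BddAbove (Set.range fun s₂ : ℤ => L s₁ - L s₂) := by
          refine ⟨L s₁ - lb, ?_⟩
          rintro x ⟨s₂, rfl⟩
          show L s₁ - L s₂ ≤ L s₁ - lb
          linarith [hL1 s₂]
        have := le_ciSup hbdd (1:ℤ)
        rw [hLo] at this
        exact this
    rw [step1, iSup_congr inner, ← logeq]
    apply le_antisymm
    · exact ciSup_le fun s₁ => by show L s₁ - lb ≤ ub - lb; linarith [hL0 s₁]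
    · have hbdd : BddAbove (Set.range fun s₁ : ℤ => L s₁ - lb) := by
        refine ⟨ub - lb, ?_⟩
        rintro x ⟨s₁, rfl⟩
        show L s₁ - lb ≤ ub - lb
        linarith [hL0 s₁]
      have := le_ciSup hbdd (0:ℤ)
      rw [show L 0 - lb = ub - lb from by rw [hLz]] at this
      exact this
  · have body : ∀ s₁ s₂ : ℤ,
        Real.log ((‖p - (s₂:ℂ)‖ * ‖q - (s₁:ℂ)‖) /
          (‖q - (s₂:ℂ)‖ * ‖p - (s₁:ℂ)‖)) = L s₂ - L s₁ := by
      intro s₁ s₂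
      rw [Real.log_div (ne_of_gt (mul_pos (hp s₂) (hq s₁))) (ne_of_gt (mul_pos (hq s₂) (hp s₁))),
          Real.log_mul (ne_of_gt (hp s₂)) (ne_of_gt (hq s₁)),
          Real.log_mul (ne_of_gt (hq s₂)) (ne_of_gt (hp s₁))]
      simp only [hL]; ring
    have step1 : dZ p q = ⨆ s₁ : ℤ, ⨆ s₂ : ℤ, (L s₂ - L s₁) := by
      unfold dZ
      exact iSup_congr fun s₁ => iSup_congr fun s₂ => body s₁ s₂
    have inner : ∀ s₁ : ℤ, (⨆ s₂ : ℤ, (L s₂ - L s₁)) = ub - L s₁ := by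
      intro s₁
      apply le_antisymm
      · exact ciSup_le fun s₂ => by show L s₂ - L s₁ ≤ ub - L s₁; linarith [hL0 s₂]
      · have hbdd : BddAbove (Set.range fun s₂ : ℤ => L s₂ - L s₁) := by
          refine ⟨ub - L s₁, ?_⟩
          rintro x ⟨s₂, rfl⟩
          show L s₂ - L s₁ ≤ ub - L s₁
          linarith [hL0 s₂]
        have := le_ciSup hbdd (0:ℤ)
        rw [hLz] at this
        exact this
    rw [step1, iSup_congr inner, ← logeq]
    apply le_antisymm
    · exact ciSup_le fun s₁ => by show ub - L s₁ ≤ ub - lb; linarith [hL1 s₁]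
    · have hbdd : BddAbove (Set.range fun s₁ : ℤ => ub - L s₁) := by
        refine ⟨ub - lb, ?_⟩
        rintro x ⟨s₁, rfl⟩
        show ub - L s₁ ≤ ub - lb
        linarith [hL1 s₁]
      have := le_ciSup hbdd (1:ℤ)
      rw [show ub - L 1 = ub - lb from by rw [hLo]] at this
      exact this

lemma keyA' (p q : ℂ)
    (hb : |2*((1 - q.re)*(‖p-1‖)^2 - (1 - p.re)*(‖q-1‖)^2)| ≤
      (‖q-1‖)^2 - (‖p-1‖)^2) (s : ℤ) :
    ‖q - (s:ℂ)‖ * ‖p - 1‖ ≤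
      ‖q - 1‖ * ‖p - (s:ℂ)‖ := by
  have e3 : ‖p - 1‖ = ‖1 - p‖ := (norm_sub_rev 1 p).symm
  have e4 : ‖q - 1‖ = ‖1 - q‖ := (norm_sub_rev 1 q).symm
  have hb' : |2*((1-q).re*(‖1-p‖)^2 - (1-p).re*(‖1-q‖)^2)| ≤
      (‖1-q‖)^2 - (‖1-p‖)^2 := by
    simpa [Complex.sub_re, Complex.one_re, ← e3, ← e4] using hb
  have h := keyA (1-q) (1-p) hb' (1-s)
  have e1 : (1:ℂ) - q - ((1-s : ℤ):ℂ) = -(q - (s:ℂ)) := by push_cast; ring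
  have e2 : (1:ℂ) - p - ((1-s : ℤ):ℂ) = -(p - (s:ℂ)) := by push_cast; ring
  rw [e1, e2, norm_neg, norm_neg] at h
  rw [e3, e4]
  exact h

lemma real_pair (aq ap : ℝ) (h0q : 0 < aq) (h1q : aq < 1) (h0p : 0 < ap) (h1p : ap < 1)
    (hle : aq ≤ ap) :
    dZ ((aq:ℝ):ℂ) ((ap:ℝ):ℂ) = Real.log (ap * (1 - aq) / (aq * (1 - ap))) ∧
    dZ ((ap:ℝ):ℂ) ((aq:ℝ):ℂ) = Real.log (ap * (1 - aq) / (aq * (1 - ap))) := by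
  set p : ℂ := ((ap:ℝ):ℂ) with hpdef
  set q : ℂ := ((aq:ℝ):ℂ) with hqdef
  have hpabs : ‖p‖ = ap := by rw [hpdef, Complex.norm_real, Real.norm_eq_abs, abs_of_pos h0p]
  have hqabs : ‖q‖ = aq := by rw [hqdef, Complex.norm_real, Real.norm_eq_abs, abs_of_pos h0q]
  have hpre : p.re = ap := Complex.ofReal_re ap
  have hqre : q.re = aq := Complex.ofReal_re aq
  have hp1abs : ‖p - 1‖ = 1 - ap := by
    rw [show p - 1 = ((ap - 1 : ℝ):ℂ) by push_cast; ring, Complex.norm_real, Real.norm_eq_abs,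
      abs_of_nonpos (by linarith)]
    ring
  have hq1abs : ‖q - 1‖ = 1 - aq := by
    rw [show q - 1 = ((aq - 1 : ℝ):ℂ) by push_cast; ring, Complex.norm_real, Real.norm_eq_abs,
      abs_of_nonpos (by linarith)]
    ring
  have hmemp : memHZ p := memHZ_of p (by simp [hpdef]) (by simpa [hpre]) (by simpa [hpre])
  have hmemq : memHZ q := memHZ_of q (by simp [hqdef]) (by simpa [hqre]) (by simpa [hqre])
  have H0 : ∀ s : ℤ, ‖p - (s:ℂ)‖ * ‖q‖ ≤
      ‖p‖ * ‖q - (s:ℂ)‖ := by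
    apply keyA
    rw [hpabs, hqabs, hpre, hqre]
    rw [abs_le]
    constructor
    · nlinarith [mul_nonneg (sub_nonneg.2 hle)
        (by nlinarith : (0:ℝ) ≤ ap*(1-aq) + aq*(1-ap))]
    · nlinarith [mul_nonneg (mul_pos h0p h0q).le (sub_nonneg.2 hle)]
  have H1 : ∀ s : ℤ, ‖q - (s:ℂ)‖ * ‖p - 1‖ ≤
      ‖q - 1‖ * ‖p - (s:ℂ)‖ := by
    apply keyA'
    rw [hpre, hqre, hp1abs, hq1abs]
    rw [abs_le]
    constructor
    · nlinarith [mul_nonneg (sub_nonneg.2 hle)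
        (by nlinarith : (0:ℝ) ≤ ap*(1-aq) + aq*(1-ap))]
    · nlinarith [mul_nonneg (mul_nonneg (sub_nonneg.2 h1p.le) (sub_nonneg.2 h1q.le))
        (sub_nonneg.2 hle)]
  have := dZ_eq_s13 p q (memHZ_abs_pos hmemp) (memHZ_abs_pos hmemq) H0 H1
  rw [hpabs, hqabs, hp1abs, hq1abs] at this
  exact this

noncomputable def g1 (t : ℝ) : ℂ := (((4:ℝ)^t / (2 + (4:ℝ)^t) : ℝ) : ℂ)

lemma g1_facts (t : ℝ) : 0 < (4:ℝ)^t / (2 + (4:ℝ)^t) ∧ (4:ℝ)^t / (2 + (4:ℝ)^t) < 1 := by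
  have hA : 0 < (4:ℝ)^t := Real.rpow_pos_of_pos (by norm_num) t
  constructor
  · positivity
  · rw [div_lt_one (by linarith)]; linarith

lemma g1_re (t : ℝ) : (g1 t).re = (4:ℝ)^t / (2 + (4:ℝ)^t) := Complex.ofReal_re _
lemma g1_im (t : ℝ) : (g1 t).im = 0 := Complex.ofReal_im _

lemma g1_memHZ (t : ℝ) : memHZ (g1 t) := by
  obtain ⟨h1, h2⟩ := g1_facts t
  exact memHZ_of _ (by rw [g1_im]) (by rw [g1_re]; exact h1) (by rw [g1_re]; exact h2)

lemma g1_spec (s t : ℝ) (hst : s ≤ t) :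
    dZ (g1 s) (g1 t) = (t - s) * Real.log 4 ∧
    dZ (g1 t) (g1 s) = (t - s) * Real.log 4 := by
  have hAs : 0 < (4:ℝ)^s := Real.rpow_pos_of_pos (by norm_num) s
  have hAt : 0 < (4:ℝ)^t := Real.rpow_pos_of_pos (by norm_num) t
  have hAle : (4:ℝ)^s ≤ (4:ℝ)^t :=
    Real.rpow_le_rpow_left_iff (by norm_num : (1:ℝ) < 4) |>.mpr hst
  obtain ⟨h0q, h1q⟩ := g1_facts s
  obtain ⟨h0p, h1p⟩ := g1_facts t
  have hle : (4:ℝ)^s / (2 + (4:ℝ)^s) ≤ (4:ℝ)^t / (2 + (4:ℝ)^t) := by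
    rw [div_le_div_iff₀ (by linarith) (by linarith)]
    nlinarith
  have key := real_pair _ _ h0q h1q h0p h1p hle
  have hratio : (4:ℝ)^t / (2 + (4:ℝ)^t) * (1 - (4:ℝ)^s / (2 + (4:ℝ)^s)) /
      ((4:ℝ)^s / (2 + (4:ℝ)^s) * (1 - (4:ℝ)^t / (2 + (4:ℝ)^t))) = (4:ℝ)^t / (4:ℝ)^s := by
    rw [show 1 - (4:ℝ)^s / (2 + (4:ℝ)^s) = 2 / (2 + (4:ℝ)^s) by
        field_simp; ring,
      show 1 - (4:ℝ)^t / (2 + (4:ℝ)^t) = 2 / (2 + (4:ℝ)^t) by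
        field_simp; ring]
    field_simp
  have hlog : Real.log ((4:ℝ)^t / (4:ℝ)^s) = (t - s) * Real.log 4 := by
    rw [Real.log_div (ne_of_gt hAt) (ne_of_gt hAs), Real.log_rpow (by norm_num),
      Real.log_rpow (by norm_num)]
    ring
  rw [hratio, hlog] at key
  exact key
noncomputable def uu (t : ℝ) : ℝ := 5/18 * ((4:ℝ)^(2*t) - 4) / ((4:ℝ)^(2*t) + 4)

noncomputable def g2 (t : ℝ) : ℂ :=
  ((1/2 + uu t : ℝ) : ℂ) + ((Real.sqrt (1/36 - (uu t)^2) : ℝ) : ℂ) * Complex.I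

lemma uu_bounds (t : ℝ) : -(5/18) < uu t ∧ uu t < 5/18 := by
  have hl : 0 < (4:ℝ)^(2*t) := Real.rpow_pos_of_pos (by norm_num) _
  constructor
  · rw [uu, lt_div_iff₀ (by linarith)]; nlinarith
  · rw [uu, div_lt_iff₀ (by linarith)]; nlinarith

lemma uu_mono {s t : ℝ} (h : s ≤ t) : uu s ≤ uu t := by
  have hs : 0 < (4:ℝ)^(2*s) := Real.rpow_pos_of_pos (by norm_num) _
  have ht : 0 < (4:ℝ)^(2*t) := Real.rpow_pos_of_pos (by norm_num) _
  have hle : (4:ℝ)^(2*s) ≤ (4:ℝ)^(2*t) :=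
    Real.rpow_le_rpow_left_iff (by norm_num : (1:ℝ) < 4) |>.mpr (by linarith)
  rw [uu, uu, div_le_div_iff₀ (by linarith) (by linarith)]
  nlinarith

lemma uu_small {t : ℝ} (h0 : 0 ≤ t) (h1 : t ≤ 1) : -(1/6) ≤ uu t ∧ uu t ≤ 1/6 := by
  have hl : 0 < (4:ℝ)^(2*t) := Real.rpow_pos_of_pos (by norm_num) _
  have hge : (1:ℝ) ≤ (4:ℝ)^(2*t) := by
    have := Real.rpow_le_rpow_left_iff (by norm_num : (1:ℝ) < 4) |>.mpr
      (by linarith : (0:ℝ) ≤ 2*t)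
    simpa [Real.rpow_zero] using this
  have hle : (4:ℝ)^(2*t) ≤ (16:ℝ) := by
    have := Real.rpow_le_rpow_left_iff (by norm_num : (1:ℝ) < 4) |>.mpr
      (by linarith : 2*t ≤ (2:ℝ))
    calc (4:ℝ)^(2*t) ≤ (4:ℝ)^(2:ℝ) := this
    _ = (16:ℝ) := by
      rw [show (2:ℝ) = ((2:ℕ):ℝ) by norm_num, Real.rpow_natCast]; norm_num
  constructor
  · rw [uu, le_div_iff₀ (by linarith)]; nlinarith
  · rw [uu, div_le_iff₀ (by linarith)]; nlinarith

lemma g2_re (t : ℝ) : (g2 t).re = 1/2 + uu t := by simp [g2]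
lemma g2_im (t : ℝ) : (g2 t).im = Real.sqrt (1/36 - (uu t)^2) := by simp [g2]

lemma g2_memHZ (t : ℝ) : memHZ (g2 t) := by
  obtain ⟨h1, h2⟩ := uu_bounds t
  refine memHZ_of _ ?_ ?_ ?_
  · rw [g2_im]; exact Real.sqrt_nonneg _
  · rw [g2_re]; linarith
  · rw [g2_re]; linarith

lemma g2_abs_sq {t : ℝ} (h0 : 0 ≤ t) (h1 : t ≤ 1) :
    (‖g2 t‖)^2 = 5/18 + uu t ∧
    (‖g2 t - 1‖)^2 = 5/18 - uu t := by
  obtain ⟨hb1, hb2⟩ := uu_small h0 h1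
  have harg : 0 ≤ 1/36 - (uu t)^2 := by nlinarith
  have hv2 : (Real.sqrt (1/36 - (uu t)^2))^2 = 1/36 - (uu t)^2 := Real.sq_sqrt harg
  constructor
  · rw [Complex.sq_norm, Complex.normSq_apply, g2_re, g2_im]
    linear_combination hv2
  · rw [Complex.sq_norm, Complex.normSq_apply, Complex.sub_re, Complex.sub_im,
      Complex.one_re, Complex.one_im, g2_re, g2_im]
    linear_combination hv2

lemma g2_spec (s t : ℝ) (hs0 : 0 ≤ s) (ht1 : t ≤ 1) (hst : s ≤ t) :
    dZ (g2 s) (g2 t) = (t - s) * Real.log 4 ∧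
    dZ (g2 t) (g2 s) = (t - s) * Real.log 4 := by
  have hs1 : s ≤ 1 := le_trans hst ht1
  have ht0 : 0 ≤ t := le_trans hs0 hst
  set u₁ := uu s with hu1
  set u₂ := uu t with hu2
  obtain ⟨hPs, hQs⟩ := g2_abs_sq hs0 hs1
  obtain ⟨hPt, hQt⟩ := g2_abs_sq ht0 ht1
  obtain ⟨hb1s, hb2s⟩ := uu_small hs0 hs1
  obtain ⟨hb1t, hb2t⟩ := uu_small ht0 ht1
  have hmono : u₁ ≤ u₂ := uu_mono hst
  set p : ℂ := g2 t
  set q : ℂ := g2 s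
  have hpre : p.re = 1/2 + u₂ := g2_re t
  have hqre : q.re = 1/2 + u₁ := g2_re s
  have H0 : ∀ n : ℤ, ‖p - (n:ℂ)‖ * ‖q‖ ≤
      ‖p‖ * ‖q - (n:ℂ)‖ := by
    apply keyA
    rw [hpre, hqre, hPt, hPs]
    rw [abs_le]
    constructor <;> nlinarith
  have H1 : ∀ n : ℤ, ‖q - (n:ℂ)‖ * ‖p - 1‖ ≤
      ‖q - 1‖ * ‖p - (n:ℂ)‖ := by
    apply keyA'
    rw [hpre, hqre, hQt, hQs]
    rw [abs_le]
    constructor <;> nlinarith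
  have key := dZ_eq_s13 p q (memHZ_abs_pos (g2_memHZ t)) (memHZ_abs_pos (g2_memHZ s)) H0 H1
  -- identify the ratio with 4^(t-s)
  have hP : 0 < ‖p‖ := by have := memHZ_abs_pos (g2_memHZ t) 0; simpa using this
  have hQ : 0 < ‖q‖ := by have := memHZ_abs_pos (g2_memHZ s) 0; simpa using this
  have hP1 : 0 < ‖p - 1‖ := by have := memHZ_abs_pos (g2_memHZ t) 1; simpa using this
  have hQ1 : 0 < ‖q - 1‖ := by have := memHZ_abs_pos (g2_memHZ s) 1; simpa using this
  set R : ℝ := ‖p‖ * ‖q - 1‖ / (‖q‖ * ‖p - 1‖)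
    with hRdef
  have hR0 : 0 ≤ R := by positivity
  have hrpow0 : 0 ≤ (4:ℝ)^(t-s) := (Real.rpow_pos_of_pos (by norm_num) _).le
  have hls : 0 < (4:ℝ)^(2*s) := Real.rpow_pos_of_pos (by norm_num) _
  have hlt : 0 < (4:ℝ)^(2*t) := Real.rpow_pos_of_pos (by norm_num) _
  have hratios : (5/18 + u₁) * 4 = (5/18 - u₁) * (4:ℝ)^(2*s) := by
    rw [hu1, uu]; field_simp; ring
  have hratiot : (5/18 + u₂) * 4 = (5/18 - u₂) * (4:ℝ)^(2*t) := by
    rw [hu2, uu]; field_simp; ring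
  have hR2 : R^2 = ((4:ℝ)^(t-s))^2 := by
    have e1 : ((4:ℝ)^(t-s))^2 = (4:ℝ)^(2*t) / (4:ℝ)^(2*s) := by
      rw [sq, ← Real.rpow_add (by norm_num : (0:ℝ) < 4), ← Real.rpow_sub (by norm_num : (0:ℝ) < 4)]
      congr 1
      ring
    have hden1 : (0:ℝ) < 5/18 - u₁ := by linarith
    have hden2 : (0:ℝ) < 5/18 - u₂ := by linarith
    have hnum1 : (0:ℝ) < 5/18 + u₁ := by linarith
    have hnum2 : (0:ℝ) < 5/18 + u₂ := by linarith
    rw [e1, hRdef, div_pow, mul_pow, mul_pow, hPt, hPs, hQt, hQs]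
    rw [div_eq_div_iff (by positivity) (by positivity)]
    linear_combination (-(5/18+u₂)) * hratios + (5/18+u₁) * hratiot
  have hReq : R = (4:ℝ)^(t-s) := by
    rw [← Real.sqrt_sq hR0, hR2, Real.sqrt_sq hrpow0]
  rw [hReq] at key
  rw [Real.log_rpow (by norm_num)] at key
  exact key

/-- The space `(ℍ ∪ (ℝ \ ℤ), d_ℤ)` is not uniquely geodesic: there are two
distinct points joined by two geodesics which differ at some parameter. -/
theorem stmt_13 :
    ∃ x y : ℂ, memHZ x ∧ memHZ y ∧ x ≠ y ∧
      ∃ γ₁ γ₂ : ℝ → ℂ,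
        (γ₁ 0 = x ∧ γ₁ 1 = y ∧ (∀ t ∈ Set.Icc (0:ℝ) 1, memHZ (γ₁ t)) ∧
          ∀ s ∈ Set.Icc (0:ℝ) 1, ∀ t ∈ Set.Icc (0:ℝ) 1,
            dZ (γ₁ s) (γ₁ t) = |s - t| * dZ x y) ∧
        (γ₂ 0 = x ∧ γ₂ 1 = y ∧ (∀ t ∈ Set.Icc (0:ℝ) 1, memHZ (γ₂ t)) ∧
          ∀ s ∈ Set.Icc (0:ℝ) 1, ∀ t ∈ Set.Icc (0:ℝ) 1,
            dZ (γ₂ s) (γ₂ t) = |s - t| * dZ x y) ∧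
        ∃ t ∈ Set.Icc (0:ℝ) 1, γ₁ t ≠ γ₂ t := by
  refine ⟨g1 0, g1 1, g1_memHZ 0, g1_memHZ 1, ?_, g1, g2, ?_, ?_, ?_⟩
  · -- x ≠ y
    intro h
    have h2 := congrArg Complex.re h
    rw [g1_re, g1_re, Real.rpow_zero, Real.rpow_one] at h2
    norm_num at h2
  · -- γ₁ is a geodesic
    have hD : dZ (g1 0) (g1 1) = Real.log 4 := by
      have := (g1_spec 0 1 zero_le_one).1
      simpa using this
    refine ⟨rfl, rfl, fun t _ => g1_memHZ t, fun s _ t _ => ?_⟩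
    rw [hD]
    rcases le_total s t with h | h
    · rw [(g1_spec s t h).1, abs_sub_comm, abs_of_nonneg (sub_nonneg.2 h)]
    · rw [(g1_spec t s h).2, abs_of_nonneg (sub_nonneg.2 h)]
  · -- γ₂ is a geodesic
    have hD : dZ (g1 0) (g1 1) = Real.log 4 := by
      have := (g1_spec 0 1 zero_le_one).1
      simpa using this
    have huu0 : uu 0 = -(1/6) := by
      have e : (4:ℝ)^(2*(0:ℝ)) = 1 := by rw [mul_zero, Real.rpow_zero]
      rw [uu, e]; norm_num
    have huu1 : uu 1 = 1/6 := by
      have e : (4:ℝ)^(2*(1:ℝ)) = 16 := by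
        rw [mul_one, show (2:ℝ) = ((2:ℕ):ℝ) by norm_num, Real.rpow_natCast]
        norm_num
      rw [uu, e]; norm_num
    have hg20 : g2 0 = g1 0 := by
      apply Complex.ext
      · rw [g2_re, g1_re, huu0, Real.rpow_zero]; norm_num
      · rw [g2_im, g1_im, huu0, show (1/36 - (-(1/6):ℝ)^2) = 0 by norm_num, Real.sqrt_zero]
    have hg21 : g2 1 = g1 1 := by
      apply Complex.ext
      · rw [g2_re, g1_re, huu1, Real.rpow_one]; norm_num
      · rw [g2_im, g1_im, huu1, show (1/36 - ((1/6):ℝ)^2) = 0 by norm_num, Real.sqrt_zero]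
    refine ⟨hg20, hg21, fun t _ => g2_memHZ t, fun s hs t ht => ?_⟩
    rw [hD]
    rcases le_total s t with h | h
    · rw [(g2_spec s t hs.1 ht.2 h).1, abs_sub_comm, abs_of_nonneg (sub_nonneg.2 h)]
    · rw [(g2_spec t s ht.1 hs.2 h).2, abs_of_nonneg (sub_nonneg.2 h)]
  · -- the geodesics differ at t = 1/2
    refine ⟨1/2, by norm_num, ?_⟩
    intro h
    have h2 := congrArg Complex.im h
    have huuh : uu (1/2) = 0 := by
      have e : (4:ℝ)^(2*(1/2:ℝ)) = 4 := by norm_num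
      rw [uu, e]; norm_num
    rw [g1_im, g2_im, huuh, show (1/36 - (0:ℝ)^2) = (1/6)^2 by norm_num,
      Real.sqrt_sq (by norm_num : (0:ℝ) ≤ 1/6)] at h2
    norm_num at h2
end
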